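/- arXiv:2507.18909 — 7 statements merged into one kernel-verified Lean document; each statement's English description precedes it below -/
import Mathlib

section
/- Let A12 ∈ ℝ^{n1×n2} and let r2 = rank(A12). Then for every positive integer k, the rank of M_k(A12) equals n1^k − (n1 − r2)^k. -/
open Matrix

noncomputable section

/-- Position-dependent Kronecker product of square matrices: the entry at
row `r` and column `c` is `∏ j, F j (r j) (c j)`. -/
def posKron {n k : ℕ} (F : Fin k → Matrix (Fin n) (Fin n) ℝ) :
    Matrix (Fin k → Fin n) (Fin k → Fin n) ℝ :=
  Matrix.of fun r c => ∏ j, F j (r j) (c j)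

/-- The `k`-fold Kronecker power `X^{⊗k}`. -/
def kronPow {n : ℕ} (k : ℕ) (X : Matrix (Fin n) (Fin n) ℝ) :
    Matrix (Fin k → Fin n) (Fin k → Fin n) ℝ :=
  posKron fun _ => X

/-- Number of columns of the `j`-th Kronecker factor in the `i`-th block of `M_k^B(A)`. -/
def mCol (q p n : ℕ) {k : ℕ} (i j : Fin k) : ℕ :=
  if j < i then q else if j = i then p else n

/-- The `i`-th block `B^{⊗(i-1)} ⊗ A ⊗ I_n^{⊗(k-i)}` of `M_k^B(A)`. -/
def mBlock {n p q k : ℕ} (B : Matrix (Fin n) (Fin q) ℝ) (A : Matrix (Fin n) (Fin p) ℝ)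
    (i : Fin k) : Matrix (Fin k → Fin n) (∀ j : Fin k, Fin (mCol q p n i j)) ℝ :=
  Matrix.of fun r c => ∏ j : Fin k,
    if h1 : j < i then B (r j) (Fin.cast (by simp [mCol, h1]) (c j))
    else if h2 : j = i then A (r j) (Fin.cast (by simp [mCol, h1, h2]) (c j))
    else (1 : Matrix (Fin n) (Fin n) ℝ) (r j) (Fin.cast (by simp [mCol, h1, h2]) (c j))

/-- The horizontal block concatenation `M_k^B(A)`, with blocks indexed by `i : Fin k`. -/
def mFull {n p q : ℕ} (k : ℕ) (B : Matrix (Fin n) (Fin q) ℝ) (A : Matrix (Fin n) (Fin p) ℝ) :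
    Matrix (Fin k → Fin n) (Σ i : Fin k, ∀ j : Fin k, Fin (mCol q p n i j)) ℝ :=
  Matrix.of fun r c => mBlock B A c.1 r c.2

namespace Stmt1Aux

open Submodule Function

variable {n n2 k : ℕ}

/-- The `i`-slice of a vector indexed by `Fin k → Fin n`. -/
def slice (i : Fin k) (v : (Fin k → Fin n) → ℝ) (f : Fin k → Fin n) : Fin n → ℝ :=
  fun x => v (Function.update f i x)

lemma slice_add (i : Fin k) (v w : (Fin k → Fin n) → ℝ) (f : Fin k → Fin n) :
    slice i (v + w) f = slice i v f + slice i w f := rfl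

lemma slice_smul (a : ℝ) (i : Fin k) (v : (Fin k → Fin n) → ℝ) (f : Fin k → Fin n) :
    slice i (a • v) f = a • slice i v f := rfl

/-- The subspace of vectors all of whose `i`-slices lie in `C`. -/
def Ui (C : Submodule ℝ (Fin n → ℝ)) (i : Fin k) : Submodule ℝ ((Fin k → Fin n) → ℝ) where
  carrier := {v | ∀ f, slice i v f ∈ C}
  zero_mem' := fun f => by
    have : slice (n := n) i 0 f = 0 := rfl
    rw [this]; exact C.zero_mem
  add_mem' := fun {v w} hv hw f => by rw [slice_add]; exact C.add_mem (hv f) (hw f)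
  smul_mem' := fun a v hv f => by rw [slice_smul]; exact C.smul_mem a (hv f)

lemma mem_Ui {C : Submodule ℝ (Fin n → ℝ)} {i : Fin k} {v : (Fin k → Fin n) → ℝ} :
    v ∈ Ui C i ↔ ∀ f, slice i v f ∈ C := Iff.rfl

/-- A basic "column" vector: delta factors away from position `i`, vector `s` at position `i`. -/
def colV (i : Fin k) (f : Fin k → ℕ) (s : Fin n → ℝ) : (Fin k → Fin n) → ℝ :=
  fun r => (∏ j ∈ Finset.univ.erase i, if (r j : ℕ) = f j then (1:ℝ) else 0) * s (r i)

lemma slice_colV (i : Fin k) (f : Fin k → ℕ) (s : Fin n → ℝ) (g : Fin k → Fin n) :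
    slice i (colV i f s) g
      = (∏ j ∈ Finset.univ.erase i, if (g j : ℕ) = f j then (1:ℝ) else 0) • s := by
  funext x
  show (∏ j ∈ Finset.univ.erase i,
      if ((Function.update g i x j : Fin n) : ℕ) = f j then (1:ℝ) else 0)
        * s (Function.update g i x i) = _
  rw [Function.update_self, Pi.smul_apply, smul_eq_mul]
  congr 1
  refine Finset.prod_congr rfl fun j hj => ?_
  rw [Function.update_of_ne (Finset.ne_of_mem_erase hj)]

lemma colV_mem_Ui {C : Submodule ℝ (Fin n → ℝ)} {s : Fin n → ℝ} (hs : s ∈ C) (i : Fin k)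
    (f : Fin k → ℕ) : colV i f s ∈ Ui C i := fun g => by
  rw [slice_colV]; exact C.smul_mem _ hs

lemma sum_colV_slice [NeZero n] (i : Fin k) (v : (Fin k → Fin n) → ℝ) :
    ∑ f ∈ Finset.univ.filter (fun f : Fin k → Fin n => f i = 0),
        colV i (fun j => (f j : ℕ)) (slice i v f) = v := by
  funext r
  rw [Finset.sum_apply, Finset.sum_eq_single (Function.update r i 0)]
  · have h1 : ∀ j ∈ Finset.univ.erase i,
        (if ((r j : ℕ)) = ((Function.update r i (0 : Fin n) j : Fin n) : ℕ)
          then (1:ℝ) else 0) = 1 := by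
      intro j hj
      rw [Function.update_of_ne (Finset.ne_of_mem_erase hj), if_pos rfl]
    show (∏ j ∈ Finset.univ.erase i, _) * _ = v r
    rw [Finset.prod_congr rfl h1, Finset.prod_const_one, one_mul]
    show v (Function.update (Function.update r i 0) i (r i)) = v r
    rw [Function.update_idem, Function.update_eq_self]
  · intro f hf hne
    obtain ⟨j, hj⟩ : ∃ j, f j ≠ Function.update r i 0 j := by
      by_contra h; push_neg at h; exact hne (funext h)
    have hji : j ≠ i := by
      rintro rfl
      rw [Function.update_self] at hj
      exact hj (Finset.mem_filter.1 hf).2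
    have hfr : f j ≠ r j := by rwa [Function.update_of_ne hji] at hj
    show (∏ j ∈ Finset.univ.erase i, _) * _ = 0
    rw [Finset.prod_eq_zero (Finset.mem_erase.2 ⟨hji, Finset.mem_univ j⟩)]
    · exact zero_mul _
    · exact if_neg fun hc => hfr (Fin.ext hc).symm
  · intro h
    exact absurd (Finset.mem_filter.2
      ⟨Finset.mem_univ (Function.update r i 0), Function.update_self i 0 r⟩) h

lemma mblock_apply (A : Matrix (Fin n) (Fin n2) ℝ) (i : Fin k) (r : Fin k → Fin n)
    (c : ∀ j, Fin (mCol n n2 n i j)) :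
    mBlock (1 : Matrix (Fin n) (Fin n) ℝ) A i r c
      = (∏ j ∈ Finset.univ.erase i, if (r j : ℕ) = (c j : ℕ) then (1:ℝ) else 0)
          * A (r i) (Fin.cast (by simp [mCol]) (c i)) := by
  simp only [mBlock, Matrix.of_apply]
  rw [← Finset.prod_erase_mul _ _ (Finset.mem_univ i)]
  congr 1
  · refine Finset.prod_congr rfl fun j hj => ?_
    have hji : j ≠ i := Finset.ne_of_mem_erase hj
    by_cases h1 : j < i
    · rw [dif_pos h1, Matrix.one_apply]
      simp [Fin.ext_iff]
    · rw [dif_neg h1, dif_neg hji, Matrix.one_apply]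
      simp [Fin.ext_iff]
  · rw [dif_neg (lt_irrefl i), dif_pos rfl]

lemma col_eq_colV (A : Matrix (Fin n) (Fin n2) ℝ) (i : Fin k)
    (c : ∀ j, Fin (mCol n n2 n i j)) :
    (mBlock (1 : Matrix (Fin n) (Fin n) ℝ) A i)ᵀ c
      = colV i (fun j => (c j : ℕ)) (Aᵀ (Fin.cast (by simp [mCol]) (c i))) := by
  funext r
  rw [Matrix.transpose_apply, mblock_apply]
  rfl

lemma colV_mem_range (A : Matrix (Fin n) (Fin n2) ℝ) (i : Fin k) (f : Fin k → Fin n)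
    (m : Fin n2) :
    colV i (fun j => (f j : ℕ)) (Aᵀ m)
      ∈ Set.range (mBlock (1 : Matrix (Fin n) (Fin n) ℝ) A i)ᵀ := by
  refine ⟨fun j => if h : j = i
      then Fin.cast (show n2 = mCol n n2 n i j by rw [h]; simp [mCol]) m
      else Fin.cast (show n = mCol n n2 n i j by simp [mCol, h]) (f j), ?_⟩
  funext r
  rw [Matrix.transpose_apply, mblock_apply]
  congr 1
  · refine Finset.prod_congr rfl fun j hj => ?_
    rw [dif_neg (Finset.ne_of_mem_erase hj), Fin.coe_cast]
  · show A (r i) _ = A (r i) m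
    congr 1
    apply Fin.ext
    rw [Fin.coe_cast, dif_pos rfl, Fin.coe_cast]

lemma range_mblock [NeZero n] (A : Matrix (Fin n) (Fin n2) ℝ) (i : Fin k) :
    LinearMap.range (mBlock (1 : Matrix (Fin n) (Fin n) ℝ) A i).mulVecLin
      = Ui (LinearMap.range A.mulVecLin) i := by
  rw [Matrix.range_mulVecLin, Matrix.range_mulVecLin]
  show span ℝ (Set.range (mBlock (1 : Matrix (Fin n) (Fin n) ℝ) A i)ᵀ) = Ui (span ℝ (Set.range Aᵀ)) i
  apply le_antisymm
  · rw [Submodule.span_le]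
    rintro _ ⟨c, rfl⟩
    rw [col_eq_colV]
    exact colV_mem_Ui (Submodule.subset_span (Set.mem_range_self _)) i _
  · intro v hv
    rw [← sum_colV_slice i v]
    refine Submodule.sum_mem _ fun f _ => ?_
    have hs : slice i v f ∈ Submodule.span ℝ (Set.range Aᵀ) := hv f
    refine Submodule.span_induction
      (p := fun s _ => colV i (fun j => (f j : ℕ)) s
        ∈ Submodule.span ℝ (Set.range (mBlock (1 : Matrix (Fin n) (Fin n) ℝ) A i)ᵀ))
      ?_ ?_ ?_ ?_ hs
    · rintro s ⟨m, rfl⟩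
      exact Submodule.subset_span (colV_mem_range A i f m)
    · show colV i (fun j => (f j : ℕ)) (0 : Fin n → ℝ)
          ∈ Submodule.span ℝ (Set.range (mBlock (1 : Matrix (Fin n) (Fin n) ℝ) A i)ᵀ)
      have h0 : colV i (fun j => (f j : ℕ)) (0 : Fin n → ℝ) = 0 := by
        funext r; simp [colV]
      rw [h0]; exact Submodule.zero_mem _
    · intro x y _ _ hx hy
      show colV i (fun j => (f j : ℕ)) (x + y)
          ∈ Submodule.span ℝ (Set.range (mBlock (1 : Matrix (Fin n) (Fin n) ℝ) A i)ᵀ)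
      have hadd : colV i (fun j => (f j : ℕ)) (x + y)
          = colV i (fun j => (f j : ℕ)) x + colV i (fun j => (f j : ℕ)) y := by
        funext r; simp [colV, mul_add]
      rw [hadd]; exact Submodule.add_mem _ hx hy
    · intro a x _ hx
      show colV i (fun j => (f j : ℕ)) (a • x)
          ∈ Submodule.span ℝ (Set.range (mBlock (1 : Matrix (Fin n) (Fin n) ℝ) A i)ᵀ)
      have hsmul : colV i (fun j => (f j : ℕ)) (a • x)
          = a • colV i (fun j => (f j : ℕ)) x := by
        funext r; simp [colV]; ring
      rw [hsmul]; exact Submodule.smul_mem _ a hx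

lemma range_mfull [NeZero n] (A : Matrix (Fin n) (Fin n2) ℝ) :
    LinearMap.range (mFull k (1 : Matrix (Fin n) (Fin n) ℝ) A).mulVecLin
      = ⨆ i : Fin k, Ui (LinearMap.range A.mulVecLin) i := by
  rw [Matrix.range_mulVecLin]
  show span ℝ (Set.range (mFull k (1 : Matrix (Fin n) (Fin n) ℝ) A)ᵀ) = _
  have h1 : Set.range (mFull k (1 : Matrix (Fin n) (Fin n) ℝ) A)ᵀ
      = ⋃ i : Fin k, Set.range (mBlock (1 : Matrix (Fin n) (Fin n) ℝ) A i)ᵀ := by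
    rw [show (mFull k (1 : Matrix (Fin n) (Fin n) ℝ) A)ᵀ
        = fun c : Σ i : Fin k, ∀ j : Fin k, Fin (mCol n n2 n i j) =>
          (mBlock (1 : Matrix (Fin n) (Fin n) ℝ) A c.1)ᵀ c.2 from rfl]
    exact Set.range_sigma_eq_iUnion_range _
  rw [h1, Submodule.span_iUnion]
  refine iSup_congr fun i => ?_
  show span ℝ (Set.range (mBlock (1 : Matrix (Fin n) (Fin n) ℝ) A i).col) = _
  rw [← Matrix.range_mulVecLin, range_mblock]

lemma posKron_mul (F G : Fin k → Matrix (Fin n) (Fin n) ℝ) :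
    posKron F * posKron G = posKron (fun j => F j * G j) := by
  ext r s
  simp only [posKron, Matrix.mul_apply, Matrix.of_apply]
  rw [Finset.sum_congr rfl (fun c _ =>
    (Finset.prod_mul_distrib
      (f := fun j => F j (r j) (c j)) (g := fun j => G j (c j) (s j))).symm)]
  rw [← Fintype.prod_sum (fun j x => F j (r j) x * G j x (s j))]

lemma posKron_one : posKron (fun _ : Fin k => (1 : Matrix (Fin n) (Fin n) ℝ)) = 1 := by
  ext r s
  simp only [posKron, Matrix.of_apply, Matrix.one_apply]
  by_cases h : r = s
  · subst h; simp
  · rw [if_neg h]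
    obtain ⟨j, hj⟩ : ∃ j, r j ≠ s j := by
      by_contra hc; push_neg at hc; exact h (funext hc)
    exact Finset.prod_eq_zero (Finset.mem_univ j) (if_neg hj)

lemma kronPow_mul (P Q : Matrix (Fin n) (Fin n) ℝ) :
    kronPow k P * kronPow k Q = kronPow k (P * Q) := posKron_mul _ _

lemma kronPow_one : kronPow k (1 : Matrix (Fin n) (Fin n) ℝ) = 1 := posKron_one

lemma map_Ui_le [NeZero n] (M : Matrix (Fin n) (Fin n) ℝ) (C : Submodule ℝ (Fin n → ℝ))
    (i : Fin k) :
    (Ui C i).map (kronPow k M).mulVecLin ≤ Ui (C.map M.mulVecLin) i := by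
  rintro _ ⟨v, hv, rfl⟩ f
  set s : Fin n → ℝ := ∑ g ∈ Finset.univ.filter (fun g : Fin k → Fin n => g i = 0),
      (∏ j ∈ Finset.univ.erase i, M (f j) (g j)) • slice i v g with hs
  have hsC : s ∈ C := Submodule.sum_mem _ fun g _ => C.smul_mem _ (hv g)
  refine ⟨s, hsC, ?_⟩
  show M.mulVecLin s = slice i ((kronPow k M).mulVecLin v) f
  funext x
  have hL : M.mulVecLin s x
      = ∑ m : Fin n, ∑ g ∈ Finset.univ.filter (fun g : Fin k → Fin n => g i = 0),
        M x m * ((∏ j ∈ Finset.univ.erase i, M (f j) (g j))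
          * v (Function.update g i m)) := by
    simp only [Matrix.mulVecLin_apply, Matrix.mulVec, dotProduct, hs, Finset.sum_apply,
      Pi.smul_apply, smul_eq_mul, slice, Finset.mul_sum]
  have hR : slice i ((kronPow k M).mulVecLin v) f x
      = ∑ c : Fin k → Fin n,
          M x (c i) * ((∏ j ∈ Finset.univ.erase i, M (f j) (c j)) * v c) := by
    simp only [slice, Matrix.mulVecLin_apply, Matrix.mulVec, dotProduct, kronPow, posKron,
      Matrix.of_apply]
    refine Finset.sum_congr rfl fun c _ => ?_
    rw [← Finset.mul_prod_erase _ _ (Finset.mem_univ i), Function.update_self,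
      Finset.prod_congr rfl (fun j hj =>
        by rw [Function.update_of_ne (Finset.ne_of_mem_erase hj)] :
        ∀ _, _), mul_assoc]
  rw [hL, hR, ← Finset.sum_product']
  refine Finset.sum_nbij' (fun p : Fin n × (Fin k → Fin n) => Function.update p.2 i p.1)
    (fun c => (c i, Function.update c i 0)) ?_ ?_ ?_ ?_ ?_
  · intro p _; exact Finset.mem_univ _
  · intro c _
    refine Finset.mem_product.2 ⟨Finset.mem_univ _, Finset.mem_filter.2
      ⟨Finset.mem_univ _, Function.update_self i 0 c⟩⟩
  · rintro ⟨m, g⟩ hp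
    have hg : g i = 0 := (Finset.mem_filter.1 (Finset.mem_product.1 hp).2).2
    show ((Function.update g i m) i, Function.update (Function.update g i m) i 0) = (m, g)
    rw [Function.update_self, Function.update_idem, ← hg, Function.update_eq_self]
  · intro c _
    show Function.update (Function.update c i 0) i (c i) = c
    rw [Function.update_idem, Function.update_eq_self]
  · rintro ⟨m, g⟩ _
    show M x m * ((∏ j ∈ Finset.univ.erase i, M (f j) (g j)) * v (Function.update g i m))
        = M x (Function.update g i m i)
          * ((∏ j ∈ Finset.univ.erase i, M (f j) (Function.update g i m j))
            * v (Function.update g i m))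
    have hprod : (∏ j ∈ Finset.univ.erase i, M (f j) (g j))
        = ∏ j ∈ Finset.univ.erase i, M (f j) (Function.update g i m j) :=
      Finset.prod_congr rfl fun j hj => by
        rw [Function.update_of_ne (Finset.ne_of_mem_erase hj)]
    rw [Function.update_self, hprod]

lemma map_Ui_eq [NeZero n] {M N : Matrix (Fin n) (Fin n) ℝ} (hMN : M * N = 1)
    (hNM : N * M = 1) (C : Submodule ℝ (Fin n → ℝ)) (i : Fin k) :
    (Ui C i).map (kronPow k M).mulVecLin = Ui (C.map M.mulVecLin) i := by
  refine le_antisymm (map_Ui_le M C i) ?_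
  have key : ∀ (P Q : Matrix (Fin n) (Fin n) ℝ), P * Q = 1 →
      ∀ p : Submodule ℝ ((Fin k → Fin n) → ℝ),
        (p.map (kronPow k Q).mulVecLin).map (kronPow k P).mulVecLin = p := by
    intro P Q h p
    rw [← Submodule.map_comp, ← Matrix.mulVecLin_mul, kronPow_mul, h, kronPow_one,
      Matrix.mulVecLin_one, Submodule.map_id]
  have h2 := map_Ui_le N (C.map M.mulVecLin) (i := i)
  have h3 : (C.map M.mulVecLin).map N.mulVecLin = C := by
    rw [← Submodule.map_comp, ← Matrix.mulVecLin_mul, hNM, Matrix.mulVecLin_one,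
      Submodule.map_id]
  rw [h3] at h2
  calc Ui (C.map M.mulVecLin) i
      = ((Ui (C.map M.mulVecLin) i).map (kronPow k N).mulVecLin).map
          (kronPow k M).mulVecLin := (key M N hMN _).symm
    _ ≤ (Ui C i).map (kronPow k M).mulVecLin := Submodule.map_mono h2

/-- Coordinate subspace of functions supported on `P`. -/
def VS (ι : Type*) (P : ι → Prop) : Submodule ℝ (ι → ℝ) where
  carrier := {v | ∀ x, ¬ P x → v x = 0}
  zero_mem' := fun x _ => rfl
  add_mem' := fun {v w} hv hw x hx => by
    show v x + w x = 0
    rw [hv x hx, hw x hx, add_zero]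
  smul_mem' := fun a v hv x hx => by
    show a * v x = 0
    rw [hv x hx, mul_zero]

lemma mem_VS {ι : Type*} {P : ι → Prop} {v : ι → ℝ} :
    v ∈ VS ι P ↔ ∀ x, ¬ P x → v x = 0 := Iff.rfl

lemma finrank_VS {ι : Type*} [Fintype ι] (P : ι → Prop) [DecidablePred P] :
    Module.finrank ℝ (VS ι P) = Fintype.card {x // P x} := by
  have e : VS ι P ≃ₗ[ℝ] ({x // P x} → ℝ) :=
    { toFun := fun v x => v.1 x.1
      map_add' := fun v w => rfl
      map_smul' := fun a v => rfl
      invFun := fun s => ⟨fun x => if h : P x then s ⟨x, h⟩ else 0, fun x hx => dif_neg hx⟩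
      left_inv := fun v => Subtype.ext (funext fun x => by
        by_cases h : P x
        · simp [h]
        · simp [h, v.2 x h])
      right_inv := fun s => funext fun x => by
        show (if h : P x.1 then s ⟨x.1, h⟩ else 0) = s x
        rw [dif_pos x.2]  }
  rw [e.finrank_eq, Module.finrank_fintype_fun_eq_card]

lemma Ui_C0 (r : ℕ) (i : Fin k) :
    Ui (VS (Fin n) (fun x => (x : ℕ) < r)) i
      = VS (Fin k → Fin n) (fun f => (f i : ℕ) < r) := by
  ext v
  constructor
  · intro hv g hg
    have h1 := hv g (g i) hg
    show v g = 0
    rwa [show slice i v g (g i) = v g by rw [slice, Function.update_eq_self]] at h1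
  · intro hv g x hx
    refine hv _ ?_
    show ¬ ((Function.update g i x i : Fin n) : ℕ) < r
    rwa [Function.update_self]

lemma iSup_Ui_C0 (r : ℕ) :
    (⨆ i : Fin k, Ui (VS (Fin n) (fun x => (x : ℕ) < r)) i)
      = VS (Fin k → Fin n) (fun f => ∃ j, (f j : ℕ) < r) := by
  apply le_antisymm
  · refine iSup_le fun i => ?_
    rw [Ui_C0]
    intro v hv g hg
    exact hv g fun hlt => hg ⟨i, hlt⟩
  · intro v hv
    rw [pi_eq_sum_univ v]
    refine Submodule.sum_mem _ fun g _ => ?_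
    by_cases hg : ∃ j, (g j : ℕ) < r
    · obtain ⟨j, hj⟩ := hg
      refine Submodule.smul_mem _ _ (Submodule.mem_iSup_of_mem j ?_)
      rw [Ui_C0]
      intro x hx
      show (if g = x then (1:ℝ) else 0) = 0
      rw [if_neg]
      rintro rfl
      exact hx hj
    · rw [hv g hg, zero_smul]
      exact Submodule.zero_mem _

lemma card_lt (r : ℕ) (hrn : r ≤ n) :
    Fintype.card {x : Fin n // (x : ℕ) < r} = r := by
  have e : {x : Fin n // (x : ℕ) < r} ≃ Fin r :=
    ⟨fun x => ⟨x.1.1, x.2⟩, fun y => ⟨⟨y.1, lt_of_lt_of_le y.2 hrn⟩, y.2⟩,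
     fun x => Subtype.ext (Fin.ext rfl), fun y => Fin.ext rfl⟩
  rw [Fintype.card_congr e, Fintype.card_fin]

lemma card_exists_lt (r : ℕ) (hrn : r ≤ n) :
    Fintype.card {f : Fin k → Fin n // ∃ j, (f j : ℕ) < r} = n ^ k - (n - r) ^ k := by
  have hT : Fintype.card (Fin k → Fin n) = n ^ k := by
    simp [Fintype.card_fun]
  have hnot : Fintype.card {f : Fin k → Fin n // ¬ ∃ j, (f j : ℕ) < r}
      = (n - r) ^ k := by
    have e1 : {f : Fin k → Fin n // ¬ ∃ j, (f j : ℕ) < r}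
        ≃ {f : Fin k → Fin n // ∀ j, ¬ (f j : ℕ) < r} :=
      Equiv.subtypeEquivRight fun f => not_exists
    have e2 : {f : Fin k → Fin n // ∀ j, ¬ (f j : ℕ) < r}
        ≃ ∀ _j : Fin k, {x : Fin n // ¬ (x : ℕ) < r} :=
      Equiv.subtypePiEquivPi (p := fun (_ : Fin k) (x : Fin n) => ¬ (x : ℕ) < r)
    have hx : Fintype.card {x : Fin n // ¬ (x : ℕ) < r} = n - r := by
      rw [Fintype.card_subtype_compl, Fintype.card_fin, card_lt r hrn]
    rw [Fintype.card_congr (e1.trans e2), Fintype.card_pi,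
      Finset.prod_congr rfl (fun j _ => hx), Finset.prod_const, Finset.card_univ,
      Fintype.card_fin]
  have hcompl := Fintype.card_subtype_compl (fun f : Fin k → Fin n => ∃ j, (f j : ℕ) < r)
  have hle := Fintype.card_subtype_le (fun f : Fin k → Fin n => ∃ j, (f j : ℕ) < r)
  rw [hnot, hT] at hcompl
  rw [hT] at hle
  rw [hcompl, Nat.sub_sub_self hle]

lemma exists_aut {V : Type*} [AddCommGroup V] [Module ℝ V] [FiniteDimensional ℝ V]
    (C D : Submodule ℝ V) (h : Module.finrank ℝ C = Module.finrank ℝ D) :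
    ∃ e : V ≃ₗ[ℝ] V, C.map (e : V →ₗ[ℝ] V) = D := by
  obtain ⟨C', hC⟩ := Submodule.exists_isCompl C
  obtain ⟨D', hD⟩ := Submodule.exists_isCompl D
  have h1 : Module.finrank ℝ C' = Module.finrank ℝ D' := by
    have e1 := Submodule.finrank_add_eq_of_isCompl hC
    have e2 := Submodule.finrank_add_eq_of_isCompl hD
    omega
  let f1 : C ≃ₗ[ℝ] D := LinearEquiv.ofFinrankEq _ _ h
  let f2 : C' ≃ₗ[ℝ] D' := LinearEquiv.ofFinrankEq _ _ h1
  set e : V ≃ₗ[ℝ] V := (Submodule.prodEquivOfIsCompl C C' hC).symm.trans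
    ((f1.prodCongr f2).trans (Submodule.prodEquivOfIsCompl D D' hD)) with he
  refine ⟨e, ?_⟩
  have hle : C.map (e : V →ₗ[ℝ] V) ≤ D := by
    rintro _ ⟨x, hx, rfl⟩
    have hsymm : (Submodule.prodEquivOfIsCompl C C' hC).symm x = (⟨x, hx⟩, 0) := by
      rw [LinearEquiv.symm_apply_eq, Submodule.coe_prodEquivOfIsCompl']
      simp
    have : e x = (f1 ⟨x, hx⟩ : V) := by
      rw [he]
      simp only [LinearEquiv.trans_apply, hsymm, LinearEquiv.prodCongr_apply,
        Submodule.coe_prodEquivOfIsCompl']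
      simp
    rw [show (e : V →ₗ[ℝ] V) x = e x from rfl, this]
    exact (f1 ⟨x, hx⟩).2
  refine Submodule.eq_of_le_of_finrank_eq hle ?_
  rw [LinearEquiv.finrank_map_eq, h]

end Stmt1Aux

open Stmt1Aux

/-- Let `A12 ∈ ℝ^{n1×n2}` and `r2 = rank A12`.  For every positive integer `k`,
`rank (M_k(A12)) = n1^k - (n1 - r2)^k`, where `M_k(A12) = M_k^{I}(A12)` is the
block concatenation whose `i`-th block is `I^{⊗(i-1)} ⊗ A12 ⊗ I^{⊗(k-i)}`. -/
theorem stmt1 {n1 n2 : ℕ} (A12 : Matrix (Fin n1) (Fin n2) ℝ) (k : ℕ) (hk : 0 < k) :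
    (mFull k (1 : Matrix (Fin n1) (Fin n1) ℝ) A12).rank
      = n1 ^ k - (n1 - A12.rank) ^ k := by
  rcases Nat.eq_zero_or_pos n1 with h0 | hn1
  · subst h0
    have hcard : Fintype.card (Fin k → Fin 0) = 0 := by
      rw [Fintype.card_fun, Fintype.card_fin, Fintype.card_fin, Nat.zero_pow hk]
    have h1 : (mFull k (1 : Matrix (Fin 0) (Fin 0) ℝ) A12).rank = 0 :=
      le_antisymm (le_trans (Matrix.rank_le_card_height _) (le_of_eq hcard)) (Nat.zero_le _)
    rw [h1, Nat.zero_pow hk, Nat.zero_sub]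
  · haveI : NeZero n1 := ⟨hn1.ne'⟩
    set r := A12.rank with hr
    set C := LinearMap.range A12.mulVecLin with hC
    have hrC : Module.finrank ℝ C = r := rfl
    have hrn : r ≤ n1 := le_trans (Matrix.rank_le_card_height A12)
      (le_of_eq (Fintype.card_fin n1))
    set C0 := VS (Fin n1) (fun x => (x : ℕ) < r) with hC0
    have hrC0 : Module.finrank ℝ C0 = r := by
      rw [hC0, finrank_VS, card_lt r hrn]
    obtain ⟨e, he⟩ := exists_aut C C0 (by rw [hrC, hrC0])
    set M := LinearMap.toMatrix' (e : (Fin n1 → ℝ) →ₗ[ℝ] (Fin n1 → ℝ)) with hM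
    set N := LinearMap.toMatrix' (e.symm : (Fin n1 → ℝ) →ₗ[ℝ] (Fin n1 → ℝ)) with hN
    have hMe : M.mulVecLin = (e : (Fin n1 → ℝ) →ₗ[ℝ] (Fin n1 → ℝ)) := by
      rw [hM, ← Matrix.toLin'_apply', Matrix.toLin'_toMatrix']
    have hNe : N.mulVecLin = (e.symm : (Fin n1 → ℝ) →ₗ[ℝ] (Fin n1 → ℝ)) := by
      rw [hN, ← Matrix.toLin'_apply', Matrix.toLin'_toMatrix']
    have hMN : M * N = 1 := by
      rw [hM, hN, ← LinearMap.toMatrix'_comp,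
        show ((e : (Fin n1 → ℝ) →ₗ[ℝ] (Fin n1 → ℝ))).comp
            (e.symm : (Fin n1 → ℝ) →ₗ[ℝ] (Fin n1 → ℝ)) = LinearMap.id from
          LinearMap.ext fun v => e.apply_symm_apply v,
        LinearMap.toMatrix'_id]
    have hNM : N * M = 1 := by
      rw [hM, hN, ← LinearMap.toMatrix'_comp,
        show ((e.symm : (Fin n1 → ℝ) →ₗ[ℝ] (Fin n1 → ℝ))).comp
            (e : (Fin n1 → ℝ) →ₗ[ℝ] (Fin n1 → ℝ)) = LinearMap.id from
          LinearMap.ext fun v => e.symm_apply_apply v,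
        LinearMap.toMatrix'_id]
    have hrank : (mFull k (1 : Matrix (Fin n1) (Fin n1) ℝ) A12).rank
        = Module.finrank ℝ
          ((⨆ i : Fin k, Ui C i : Submodule ℝ ((Fin k → Fin n1) → ℝ)) :
            Submodule ℝ ((Fin k → Fin n1) → ℝ)) := by
      rw [Matrix.rank, range_mfull, ← hC]
    have hmap : ∀ i : Fin k, (Ui C i).map (kronPow k M).mulVecLin = Ui C0 i := by
      intro i
      rw [map_Ui_eq hMN hNM, hMe, he]
    let E : ((Fin k → Fin n1) → ℝ) ≃ₗ[ℝ] ((Fin k → Fin n1) → ℝ) :=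
      LinearEquiv.ofLinear (kronPow k M).mulVecLin (kronPow k N).mulVecLin
        (by rw [← Matrix.mulVecLin_mul, kronPow_mul, hMN, kronPow_one, Matrix.mulVecLin_one])
        (by rw [← Matrix.mulVecLin_mul, kronPow_mul, hNM, kronPow_one, Matrix.mulVecLin_one])
    have hfr : Module.finrank ℝ
          ((⨆ i : Fin k, Ui C i : Submodule ℝ ((Fin k → Fin n1) → ℝ)) :
            Submodule ℝ ((Fin k → Fin n1) → ℝ))
        = Module.finrank ℝ
          ((⨆ i : Fin k, Ui C0 i : Submodule ℝ ((Fin k → Fin n1) → ℝ)) :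
            Submodule ℝ ((Fin k → Fin n1) → ℝ)) := by
      have hmapsup : Submodule.map (E : ((Fin k → Fin n1) → ℝ) →ₗ[ℝ] ((Fin k → Fin n1) → ℝ))
          (⨆ i : Fin k, Ui C i) = ⨆ i : Fin k, Ui C0 i := by
        rw [show (E : ((Fin k → Fin n1) → ℝ) →ₗ[ℝ] ((Fin k → Fin n1) → ℝ))
            = (kronPow k M).mulVecLin from rfl, Submodule.map_iSup]
        exact iSup_congr hmap
      rw [← hmapsup, LinearEquiv.finrank_map_eq]
    rw [hrank, hfr, hC0, iSup_Ui_C0, finrank_VS, card_exists_lt r hrn]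
end
end

section
/- Let A12 ∈ ℝ^{n1×n2} have full column rank with n2 < n1, let R = I_{n1} − A12(A12ᵀA12)⁻¹A12ᵀ, and let Ĩ ∈ ℝ^{n1×(n1−n2)} be any matrix such that RĨ has full column rank n1 − n2. Then for every positive integer k, the matrix M_k^{Ĩ}(A12) has full column rank; in particular its number of columns, n2 · ∑_{i=1}^{k} n1^{k−i}(n1−n2)^{i−1}, equals its rank n1^k − (n1−n2)^k. -/
open Matrix

noncomputable section

/-! ### Auxiliary results -/

/-- Full column rank implies injectivity of `mulVec`. -/
lemma inj_of_rank {m n : Type*} [Fintype m] [Fintype n] [DecidableEq n]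
    (A : Matrix m n ℝ) (h : A.rank = Fintype.card n) :
    Function.Injective A.mulVec := by
  have hrn := LinearMap.finrank_range_add_finrank_ker A.mulVecLin
  rw [Matrix.rank] at h
  rw [h, Module.finrank_pi] at hrn
  have hker : Module.finrank ℝ (LinearMap.ker A.mulVecLin) = 0 := by omega
  have : LinearMap.ker A.mulVecLin = ⊥ := Submodule.finrank_eq_zero.1 hker
  have hinj := LinearMap.ker_eq_bot.1 this
  exact hinj

lemma prod_mCol {q p n k : ℕ} (i : Fin k) :
    ∏ j : Fin k, mCol q p n i j = q ^ (i : ℕ) * p * n ^ (k - 1 - (i : ℕ)) := by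
  have h1 : ∀ j : Fin k, mCol q p n i j
      = (fun t : ℕ => if t < (i:ℕ) then q else if t = (i:ℕ) then p else n) (j : ℕ) := by
    intro j
    simp only [mCol, Fin.lt_def, Fin.ext_iff]
  have h2 : ∏ j : Fin k, mCol q p n i j
      = ∏ t ∈ Finset.range k, (if t < (i:ℕ) then q else if t = (i:ℕ) then p else n) := by
    rw [← Fin.prod_univ_eq_prod_range (fun t => if t < (i:ℕ) then q else if t = (i:ℕ) then p else n) k]
    exact Finset.prod_congr rfl (fun j _ => h1 j)
  rw [h2]
  have hik : (i : ℕ) + 1 ≤ k := i.2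
  rw [← Finset.prod_range_mul_prod_Ico _ hik, Finset.prod_range_succ]
  have e1 : ∏ t ∈ Finset.range (i:ℕ), (if t < (i:ℕ) then q else if t = (i:ℕ) then p else n) = q ^ (i:ℕ) := by
    rw [Finset.prod_eq_pow_card (b := q) (fun t ht => by simp [Finset.mem_range.1 ht]),
      Finset.card_range]
  have e2 : ∏ t ∈ Finset.Ico ((i:ℕ)+1) k, (if t < (i:ℕ) then q else if t = (i:ℕ) then p else n) = n ^ (k - 1 - (i:ℕ)) := by
    rw [Finset.prod_eq_pow_card (b := n) (fun t ht => by
      have := (Finset.mem_Ico.1 ht).1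
      have h2 : ¬ t < (i:ℕ) := by omega
      have h3 : ¬ t = (i:ℕ) := by omega
      simp [h2, h3]), Nat.card_Ico]
    congr 1; omega
  rw [e1, e2]
  simp [if_neg (lt_irrefl (i:ℕ))]

lemma telescope (p q n : ℕ) (hpq : p + q = n) :
    ∀ k : ℕ, p * (∑ i ∈ Finset.range k, n ^ (k - 1 - i) * q ^ i) + q ^ k = n ^ k := by
  intro k
  induction k with
  | zero => simp
  | succ k ih =>
    rw [Finset.sum_range_succ']
    have hf0 : n ^ (k + 1 - 1 - 0) * q ^ 0 = n ^ k := by simp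
    have hstep : ∀ i, n ^ (k + 1 - 1 - (i+1)) * q ^ (i+1) = q * (n ^ (k - 1 - i) * q ^ i) := by
      intro i
      have : k + 1 - 1 - (i+1) = k - 1 - i := by omega
      rw [this]; ring
    rw [hf0, Finset.sum_congr rfl (fun i _ => hstep i), ← Finset.mul_sum]
    set s := ∑ i ∈ Finset.range k, n ^ (k-1-i) * q^i with hs
    have key : q * (p * s + q ^ k) = q * n ^ k := by rw [ih]
    calc p * (q * s + n ^ k) + q ^ (k+1)
        = q * (p * s + q ^ k) + p * n ^ k := by ring
      _ = q * n ^ k + p * n ^ k := by rw [key]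
      _ = n ^ (k+1) := by rw [← hpq]; ring

/-- The explicit left inverse of `mFull`. -/
def gMat {n p q : ℕ} (k : ℕ) (L : Matrix (Fin n) (Fin n) ℝ) (e : Fin p ⊕ Fin q ≃ Fin n) :
    Matrix (Σ i : Fin k, ∀ j : Fin k, Fin (mCol q p n i j)) (Fin k → Fin n) ℝ :=
  Matrix.of fun ic r => ∏ j : Fin k,
    if h1 : j < ic.1 then L (e (Sum.inr (Fin.cast (by simp [mCol, h1]) (ic.2 j)))) (r j)
    else if h2 : j = ic.1 then L (e (Sum.inl (Fin.cast (by simp [mCol, h1, h2]) (ic.2 j)))) (r j)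
    else if Fin.cast (by simp [mCol, h1, h2]) (ic.2 j) = r j then (1:ℝ) else 0

theorem gMat_mul {n p q : ℕ} (k : ℕ) (B : Matrix (Fin n) (Fin q) ℝ)
    (A : Matrix (Fin n) (Fin p) ℝ) (L : Matrix (Fin n) (Fin n) ℝ)
    (e : Fin p ⊕ Fin q ≃ Fin n)
    (hLA : L * A = Matrix.of fun r b => if r = e (Sum.inl b) then (1:ℝ) else 0)
    (hLB : L * B = Matrix.of fun r b => if r = e (Sum.inr b) then (1:ℝ) else 0) :
    gMat k L e * mFull k B A = 1 := by
  ext ⟨i, c⟩ ⟨i', c'⟩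
  rw [Matrix.mul_apply]
  -- the j-th "combined factor"
  set f : Fin k → Fin n → ℝ := fun j s =>
    (if h1 : j < i then L (e (Sum.inr (Fin.cast (by simp [mCol, h1]) (c j)))) s
     else if h2 : j = i then L (e (Sum.inl (Fin.cast (by simp [mCol, h1, h2]) (c j)))) s
     else if Fin.cast (by simp [mCol, h1, h2]) (c j) = s then (1:ℝ) else 0) *
    (if h1 : j < i' then B s (Fin.cast (by simp [mCol, h1]) (c' j))
     else if h2 : j = i' then A s (Fin.cast (by simp [mCol, h1, h2]) (c' j))
     else (1 : Matrix (Fin n) (Fin n) ℝ) s (Fin.cast (by simp [mCol, h1, h2]) (c' j))) with hf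
  have step1 : ∑ r : Fin k → Fin n, gMat k L e ⟨i,c⟩ r * mFull k B A r ⟨i',c'⟩
      = ∏ j : Fin k, ∑ s : Fin n, f j s := by
    rw [Fintype.prod_sum f]
    refine Finset.sum_congr rfl fun r _ => ?_
    simp only [gMat, mFull, mBlock, Matrix.of_apply, hf]
    rw [← Finset.prod_mul_distrib]
  rw [step1]
  -- pairing sums
  have sumLB : ∀ (r : Fin n) (b : Fin q),
      ∑ s : Fin n, L r s * B s b = if r = e (Sum.inr b) then (1:ℝ) else 0 := by
    intro r b
    rw [← Matrix.mul_apply, hLB]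
    rfl
  have sumLA : ∀ (r : Fin n) (b : Fin p),
      ∑ s : Fin n, L r s * A s b = if r = e (Sum.inl b) then (1:ℝ) else 0 := by
    intro r b
    rw [← Matrix.mul_apply, hLA]
    rfl
  rcases lt_trichotomy i i' with hii | hii | hii
  · -- i < i' : factor at j = i vanishes
    have hp : mCol q p n i i = p := by simp [mCol]
    have hq : mCol q p n i' i = q := by simp [mCol, hii]
    have key : ∀ s, f i s
        = L (e (Sum.inl (Fin.cast hp (c i)))) s * B s (Fin.cast hq (c' i)) := by
      intro s
      simp only [hf]
      simp [hii, lt_irrefl]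
    have hzero : ∑ s : Fin n, f i s = 0 := by
      simp only [key]
      rw [sumLB, if_neg]
      intro h
      exact absurd (e.injective h) (by simp)
    rw [Finset.prod_eq_zero (Finset.mem_univ i) hzero]
    exact (Matrix.one_apply_ne (fun h => (ne_of_lt hii) (congrArg Sigma.fst h))).symm
  · -- i = i'
    subst hii
    have factor : ∀ j : Fin k, ∑ s : Fin n, f j s
        = if (c j : ℕ) = (c' j : ℕ) then (1:ℝ) else 0 := by
      intro j
      rcases lt_trichotomy j i with h | h | h
      · have hq : mCol q p n i j = q := by simp [mCol, h]
        have key : ∀ s, f j s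
            = L (e (Sum.inr (Fin.cast hq (c j)))) s * B s (Fin.cast hq (c' j)) := by
          intro s
          simp only [hf]
          simp [h]
        simp only [key]
        rw [sumLB]
        simp [e.injective.eq_iff, Fin.ext_iff]
      · subst h
        have hp : mCol q p n j j = p := by simp [mCol]
        have key : ∀ s, f j s
            = L (e (Sum.inl (Fin.cast hp (c j)))) s * A s (Fin.cast hp (c' j)) := by
          intro s
          simp only [hf]
          simp
        simp only [key]
        rw [sumLA]
        simp [e.injective.eq_iff, Fin.ext_iff]
      · have hn : mCol q p n i j = n := by
          have h1 : ¬ j < i := by omega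
          have h2 : j ≠ i := by omega
          simp [mCol, h1, h2]
        have h1 : ¬ j < i := by omega
        have h2 : j ≠ i := by omega
        have key : ∀ s, f j s
            = (if Fin.cast hn (c j) = s then (1:ℝ) else 0)
              * (if s = Fin.cast hn (c' j) then (1:ℝ) else 0) := by
          intro s
          simp only [hf]
          simp [h1, h2, Matrix.one_apply]
        simp only [key, ite_mul, one_mul, zero_mul, Finset.sum_ite_eq, Finset.mem_univ,
          if_true]
        simp [Fin.ext_iff]
    rw [Finset.prod_congr rfl (fun j _ => factor j), Finset.prod_boole]
    have hone : ((1 : Matrix (Σ i : Fin k, ∀ j : Fin k, Fin (mCol q p n i j)) (Σ i : Fin k, ∀ j : Fin k, Fin (mCol q p n i j)) ℝ) ⟨i,c⟩ ⟨i,c'⟩)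
        = if c = c' then 1 else 0 := by
      by_cases hcc : c = c'
      · subst hcc; simp
      · rw [Matrix.one_apply_ne (fun h => hcc (eq_of_heq (Sigma.mk.inj_iff.1 h).2)), if_neg hcc]
    rw [hone]
    by_cases hcc : c = c'
    · subst hcc; simp
    · rw [if_neg hcc, if_neg]
      intro hall
      exact hcc (funext fun j => Fin.ext (hall j (Finset.mem_univ j)))
  · -- i' < i : factor at j = i' vanishes
    have hp : mCol q p n i' i' = p := by simp [mCol]
    have hq : mCol q p n i i' = q := by simp [mCol, hii]
    have key : ∀ s, f i' s
        = L (e (Sum.inr (Fin.cast hq (c i')))) s * A s (Fin.cast hp (c' i')) := by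
      intro s
      simp only [hf]
      simp [hii, lt_irrefl]
    have hzero : ∑ s : Fin n, f i' s = 0 := by
      simp only [key]
      rw [sumLA, if_neg]
      intro h
      exact absurd (e.injective h) (by simp)
    rw [Finset.prod_eq_zero (Finset.mem_univ i') hzero]
    exact (Matrix.one_apply_ne (fun h => (ne_of_gt hii) (congrArg Sigma.fst h))).symm

/-- Let `A12 ∈ ℝ^{n1×n2}` have full column rank with `n2 < n1`,
`R = I - A12 (A12ᵀ A12)⁻¹ A12ᵀ`, and let `Ĩ ∈ ℝ^{n1×(n1-n2)}` be such that `R Ĩ` has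
full column rank `n1 - n2`.  Then for every positive integer `k`, `M_k^{Ĩ}(A12)` has
full column rank; in particular its number of columns,
`n2 * ∑_{i=1}^{k} n1^(k-i) (n1-n2)^(i-1)`, equals its rank `n1^k - (n1-n2)^k`. -/
theorem stmt2 {n1 n2 : ℕ} (hn : n2 < n1) (A12 : Matrix (Fin n1) (Fin n2) ℝ)
    (hA : A12.rank = n2)
    (R : Matrix (Fin n1) (Fin n1) ℝ)
    (hR : R = 1 - A12 * (A12ᵀ * A12)⁻¹ * A12ᵀ)
    (Itil : Matrix (Fin n1) (Fin (n1 - n2)) ℝ)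
    (hItil : (R * Itil).rank = n1 - n2)
    (k : ℕ) (hk : 0 < k) :
    (mFull k Itil A12).rank
        = Fintype.card (Σ i : Fin k, ∀ j : Fin k, Fin (mCol (n1 - n2) n2 n1 i j))
    ∧ Fintype.card (Σ i : Fin k, ∀ j : Fin k, Fin (mCol (n1 - n2) n2 n1 i j))
        = n2 * ∑ i ∈ Finset.range k, n1 ^ (k - 1 - i) * (n1 - n2) ^ i
    ∧ (mFull k Itil A12).rank = n1 ^ k - (n1 - n2) ^ k := by
  -- the index equivalence
  have hsum : n2 + (n1 - n2) = n1 := by omega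
  let e : Fin n2 ⊕ Fin (n1 - n2) ≃ Fin n1 := finSumFinEquiv.trans (finCongr hsum)
  -- the square matrix `S = [A12 | Itil]`
  let S : Matrix (Fin n1) (Fin n1) ℝ :=
    Matrix.of fun r s => Sum.elim (A12 r) (Itil r) (e.symm s)
  have hSA : ∀ (r : Fin n1) (b : Fin n2), S r (e (Sum.inl b)) = A12 r b := by
    intro r b; simp [S]
  have hSB : ∀ (r : Fin n1) (b : Fin (n1 - n2)), S r (e (Sum.inr b)) = Itil r b := by
    intro r b; simp [S]
  -- injectivity facts
  have hinjA : Function.Injective A12.mulVec :=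
    inj_of_rank A12 (by rw [hA, Fintype.card_fin])
  have hinjRI : Function.Injective (R * Itil).mulVec :=
    inj_of_rank _ (by rw [hItil, Fintype.card_fin])
  -- `A12ᵀ * A12` is invertible
  have hATA : IsUnit (A12ᵀ * A12) := by
    apply Matrix.mulVec_injective_iff_isUnit.1
    apply inj_of_rank
    rw [Matrix.rank_transpose_mul_self, hA, Fintype.card_fin]
  have hRA : R * A12 = 0 := by
    rw [hR, Matrix.sub_mul, Matrix.one_mul, Matrix.mul_assoc, Matrix.mul_assoc,
      Matrix.nonsing_inv_mul _
        ((Matrix.isUnit_iff_isUnit_det _).1 hATA), Matrix.mul_one, sub_self]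
  -- `S` has trivial kernel, hence is invertible
  have hSker : ∀ x : Fin n1 → ℝ, S *ᵥ x = 0 → x = 0 := by
    intro x hx
    set x1 : Fin n2 → ℝ := fun b => x (e (Sum.inl b)) with hx1def
    set x2 : Fin (n1 - n2) → ℝ := fun b => x (e (Sum.inr b)) with hx2def
    have hdecomp : S *ᵥ x = A12 *ᵥ x1 + Itil *ᵥ x2 := by
      funext r
      simp only [Matrix.mulVec, dotProduct, Pi.add_apply]
      rw [← Equiv.sum_comp e (fun s => S r s * x s), Fintype.sum_sum_type]
      congr 1
      · exact Finset.sum_congr rfl fun b _ => by rw [hSA]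
      · exact Finset.sum_congr rfl fun b _ => by rw [hSB]
    have hRx : (R * Itil) *ᵥ x2 = 0 := by
      have h0 : R *ᵥ (S *ᵥ x) = 0 := by rw [hx, Matrix.mulVec_zero]
      rw [hdecomp, Matrix.mulVec_add, Matrix.mulVec_mulVec, Matrix.mulVec_mulVec, hRA] at h0
      simpa using h0
    have hx2 : x2 = 0 := by
      apply hinjRI
      rw [hRx, Matrix.mulVec_zero]
    have hx1 : x1 = 0 := by
      apply hinjA
      have : A12 *ᵥ x1 = 0 := by
        have := hdecomp.symm.trans hx
        rwa [hx2, Matrix.mulVec_zero, add_zero] at this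
      rw [this, Matrix.mulVec_zero]
    funext s
    rcases hst : e.symm s with b | b
    · have hs : s = e (Sum.inl b) := by rw [← hst, Equiv.apply_symm_apply]
      rw [hs]
      exact congrFun hx1 b
    · have hs : s = e (Sum.inr b) := by rw [← hst, Equiv.apply_symm_apply]
      rw [hs]
      exact congrFun hx2 b
  have hSinj : Function.Injective S.mulVec := by
    intro x y hxy
    have : S *ᵥ (x - y) = 0 := by rw [Matrix.mulVec_sub, hxy, sub_self]
    have := hSker _ this
    exact sub_eq_zero.1 this
  have hSU : IsUnit S := Matrix.mulVec_injective_iff_isUnit.1 hSinj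
  have hLS : S⁻¹ * S = 1 := Matrix.nonsing_inv_mul S ((Matrix.isUnit_iff_isUnit_det _).1 hSU)
  -- the normalized forms
  have hLA : S⁻¹ * A12 = Matrix.of fun r b => if r = e (Sum.inl b) then (1:ℝ) else 0 := by
    ext r b
    rw [Matrix.mul_apply]
    have : ∀ j, S⁻¹ r j * A12 j b = S⁻¹ r j * S j (e (Sum.inl b)) := fun j => by rw [hSA]
    rw [Finset.sum_congr rfl fun j _ => this j, ← Matrix.mul_apply, hLS, Matrix.one_apply]
    rfl
  have hLB : S⁻¹ * Itil = Matrix.of fun r b => if r = e (Sum.inr b) then (1:ℝ) else 0 := by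
    ext r b
    rw [Matrix.mul_apply]
    have : ∀ j, S⁻¹ r j * Itil j b = S⁻¹ r j * S j (e (Sum.inr b)) := fun j => by rw [hSB]
    rw [Finset.sum_congr rfl fun j _ => this j, ← Matrix.mul_apply, hLS, Matrix.one_apply]
    rfl
  have hGM : gMat k S⁻¹ e * mFull k Itil A12 = 1 := gMat_mul k Itil A12 S⁻¹ e hLA hLB
  -- full column rank
  have part1 : (mFull k Itil A12).rank
      = Fintype.card (Σ i : Fin k, ∀ j : Fin k, Fin (mCol (n1 - n2) n2 n1 i j)) := by
    refine le_antisymm ((mFull k Itil A12).rank_le_card_width) ?_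
    calc Fintype.card (Σ i : Fin k, ∀ j : Fin k, Fin (mCol (n1 - n2) n2 n1 i j))
        = (gMat k S⁻¹ e * mFull k Itil A12).rank := by rw [hGM, Matrix.rank_one]
      _ ≤ (mFull k Itil A12).rank := Matrix.rank_mul_le_right _ _
  -- cardinality computations
  have card_eq : Fintype.card (Σ i : Fin k, ∀ j : Fin k, Fin (mCol (n1 - n2) n2 n1 i j))
      = ∑ i : Fin k, (n1 - n2) ^ (i : ℕ) * n2 * n1 ^ (k - 1 - (i : ℕ)) := by
    rw [Fintype.card_sigma]
    refine Finset.sum_congr rfl fun i _ => ?_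
    rw [Fintype.card_pi]
    simp only [Fintype.card_fin]
    exact prod_mCol i
  have part2 : Fintype.card (Σ i : Fin k, ∀ j : Fin k, Fin (mCol (n1 - n2) n2 n1 i j))
      = n2 * ∑ i ∈ Finset.range k, n1 ^ (k - 1 - i) * (n1 - n2) ^ i := by
    rw [card_eq, Finset.mul_sum]
    rw [Fin.sum_univ_eq_sum_range (fun i => (n1 - n2) ^ i * n2 * n1 ^ (k - 1 - i)) k]
    exact Finset.sum_congr rfl fun i _ => by ring
  have htel := telescope n2 (n1 - n2) n1 (by omega) k
  have part3 : (mFull k Itil A12).rank = n1 ^ k - (n1 - n2) ^ k := by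
    rw [part1, part2]
    omega
  exact ⟨part1, part2, part3⟩
end
end

section
/- Let A12 ∈ ℝ^{n1×n2} have full column rank, let P = A12(A12ᵀA12)⁻¹A12ᵀ and R = I_{n1} − P. Then for every positive integer k, the ordered product ∏_{i=1}^{k} (I_{n1}^{⊗k} − R^{⊗(i−1)} ⊗ P ⊗ I_{n1}^{⊗(k−i)}) equals R^{⊗k}. (The factor I_{n1}^{⊗k} − R^{⊗(i−1)} ⊗ P ⊗ I_{n1}^{⊗(k−i)} is the orthogonal projector onto the orthogonal complement of the column space of Ẑ_i := R^{⊗(i−1)} ⊗ A12 ⊗ I_{n1}^{⊗(k−i)}.) -/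
open Matrix

noncomputable section

lemma posKron_mul {n k : ℕ} (F G : Fin k → Matrix (Fin n) (Fin n) ℝ) :
    posKron F * posKron G = posKron (fun j => F j * G j) := by
  ext r c
  simp only [posKron, Matrix.mul_apply, Matrix.of_apply]
  rw [Finset.prod_univ_sum (fun _ => (Finset.univ : Finset (Fin n)))
    (fun j x => F j (r j) x * G j x (c j))]
  refine Finset.sum_congr rfl fun p _ => ?_
  rw [Finset.prod_mul_distrib]

lemma posKron_one {n k : ℕ} :
    posKron (fun _ : Fin k => (1 : Matrix (Fin n) (Fin n) ℝ)) = 1 := by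
  ext r c
  simp only [posKron, Matrix.of_apply, Matrix.one_apply]
  by_cases h : r = c
  · subst h; simp
  · obtain ⟨j, hj⟩ := Function.ne_iff.mp h
    rw [if_neg h]
    exact Finset.prod_eq_zero (Finset.mem_univ j) (by rw [if_neg hj])

/-- Linearity step: splitting off the `R = 1 - P` factor at position `m`. -/
lemma posKron_step {n k : ℕ} (P R : Matrix (Fin n) (Fin n) ℝ) (hR : R = 1 - P)
    (m : ℕ) (hm : m < k) :
    posKron (fun l : Fin k => if (l : ℕ) < m + 1 then R else 1)
      = posKron (fun l : Fin k => if (l : ℕ) < m then R else 1)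
        - posKron (fun l : Fin k => if (l : ℕ) < m then R else
            if (l : ℕ) = m then P else 1) := by
  ext r c
  set i0 : Fin k := ⟨m, hm⟩
  have hQ : ∀ (F G : Fin k → Matrix (Fin n) (Fin n) ℝ),
      (∀ j, j ≠ i0 → F j = G j) →
      ∏ j ∈ Finset.univ \ {i0}, F j (r j) (c j)
        = ∏ j ∈ Finset.univ \ {i0}, G j (r j) (c j) := by
    intro F G h
    refine Finset.prod_congr rfl fun j hj => ?_
    rw [h j (by simpa using (Finset.mem_sdiff.mp hj).2)]
  simp only [posKron, Matrix.of_apply, Matrix.sub_apply]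
  rw [Finset.prod_eq_mul_prod_sdiff_singleton_of_mem (Finset.mem_univ i0),
      Finset.prod_eq_mul_prod_sdiff_singleton_of_mem (i := i0) (Finset.mem_univ i0)
        (f := fun j => (if (j : ℕ) < m then R else (1 : Matrix (Fin n) (Fin n) ℝ)) (r j) (c j)),
      Finset.prod_eq_mul_prod_sdiff_singleton_of_mem (i := i0) (Finset.mem_univ i0)
        (f := fun j => (if (j : ℕ) < m then R else
          if (j : ℕ) = m then P else (1 : Matrix (Fin n) (Fin n) ℝ)) (r j) (c j))]
  have e1 : ∀ j : Fin k, j ≠ i0 →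
      (if (j : ℕ) < m + 1 then R else (1 : Matrix (Fin n) (Fin n) ℝ))
        = (if (j : ℕ) < m then R else 1) := by
    intro j hj
    have : (j : ℕ) ≠ m := fun h => hj (Fin.ext h)
    by_cases h : (j : ℕ) < m
    · rw [if_pos (Nat.lt_succ_of_lt h), if_pos h]
    · rw [if_neg (by omega), if_neg h]
  have e2 : ∀ j : Fin k, j ≠ i0 →
      (if (j : ℕ) < m then R else
        if (j : ℕ) = m then P else (1 : Matrix (Fin n) (Fin n) ℝ))
        = (if (j : ℕ) < m then R else 1) := by
    intro j hj
    have : (j : ℕ) ≠ m := fun h => hj (Fin.ext h)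
    by_cases h : (j : ℕ) < m
    · rw [if_pos h, if_pos h]
    · rw [if_neg h, if_neg h, if_neg this]
  rw [hQ _ _ e1, hQ _ _ e2]
  have hi0 : (i0 : ℕ) = m := rfl
  rw [show (if (i0 : ℕ) < m + 1 then R else (1 : Matrix (Fin n) (Fin n) ℝ)) = R by
        rw [if_pos (by omega)],
      show (if (i0 : ℕ) < m then R else (1 : Matrix (Fin n) (Fin n) ℝ)) = 1 by
        rw [if_neg (by omega)],
      show (if (i0 : ℕ) < m then R else
          if (i0 : ℕ) = m then P else (1 : Matrix (Fin n) (Fin n) ℝ)) = P by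
        rw [if_neg (by omega), if_pos hi0]]
  rw [hR]
  simp only [Matrix.sub_apply]
  ring

/-- Let `A12 ∈ ℝ^{n1×n2}` have full column rank, `P = A12 (A12ᵀ A12)⁻¹ A12ᵀ`,
`R = I - P`.  Then the ordered product
`∏_{i=1}^{k} (I^{⊗k} - R^{⊗(i-1)} ⊗ P ⊗ I^{⊗(k-i)})` equals `R^{⊗k}`. -/
theorem stmt5 {n1 n2 : ℕ} (A12 : Matrix (Fin n1) (Fin n2) ℝ) (hA : A12.rank = n2)
    (P R : Matrix (Fin n1) (Fin n1) ℝ)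
    (hP : P = A12 * (A12ᵀ * A12)⁻¹ * A12ᵀ) (hR : R = 1 - P)
    (k : ℕ) (hk : 0 < k) :
    (List.ofFn fun i : Fin k =>
        (1 : Matrix (Fin k → Fin n1) (Fin k → Fin n1) ℝ)
          - posKron (fun l => if l < i then R else if l = i then P else 1)).prod
      = kronPow k R := by
  -- First: `A12ᵀ * A12` is invertible, hence `P` is idempotent.
  set B := A12ᵀ * A12 with hB
  have hrankB : B.rank = n2 := by rw [hB, Matrix.rank_transpose_mul_self, hA]
  have hdet : IsUnit B.det := by
    rw [isUnit_iff_ne_zero]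
    intro h0
    obtain ⟨v, hv, hBv⟩ := Matrix.exists_mulVec_eq_zero_iff.mpr h0
    have hker : LinearMap.ker B.mulVecLin = ⊥ := by
      rw [← Submodule.finrank_eq_zero (R := ℝ)]
      have h1 := LinearMap.finrank_range_add_finrank_ker B.mulVecLin
      rw [Module.finrank_fin_fun] at h1
      have h2 : Module.finrank ℝ (LinearMap.range B.mulVecLin) = n2 := hrankB
      omega
    exact hv (Matrix.ker_mulVecLin_eq_bot_iff.mp hker v hBv)
  have hBinv : B * B⁻¹ = 1 := Matrix.mul_nonsing_inv B hdet
  have hPP : P * P = P := by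
    rw [hP]
    calc A12 * B⁻¹ * A12ᵀ * (A12 * B⁻¹ * A12ᵀ)
        = A12 * B⁻¹ * (B * B⁻¹) * A12ᵀ := by
          simp only [hB, Matrix.mul_assoc]
      _ = A12 * B⁻¹ * A12ᵀ := by rw [hBinv, Matrix.mul_one]
  have hRR : R * R = R := by
    rw [hR]; rw [Matrix.sub_mul, Matrix.mul_sub, Matrix.mul_sub, hPP]
    simp
  -- Main induction on prefixes of the list.
  set f : Fin k → Matrix (Fin k → Fin n1) (Fin k → Fin n1) ℝ := fun i =>
    (1 : Matrix (Fin k → Fin n1) (Fin k → Fin n1) ℝ)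
      - posKron (fun l => if l < i then R else if l = i then P else 1) with hf
  have key : ∀ m : ℕ, m ≤ k →
      ((List.ofFn f).take m).prod
        = posKron (fun l : Fin k => if (l : ℕ) < m then R else 1) := by
    intro m
    induction m with
    | zero =>
        intro _
        simp only [List.take_zero, List.prod_nil]
        rw [show (fun l : Fin k => if (l : ℕ) < 0 then R else (1 : Matrix (Fin n1) (Fin n1) ℝ))
            = fun _ => 1 from funext fun l => by simp]
        exact posKron_one.symm
    | succ m ih =>
        intro hm1
        have hm : m < k := hm1
        have hget : (List.ofFn f)[m]? = some (f ⟨m, hm⟩) := by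
          rw [List.getElem?_eq_getElem (by simpa using hm)]
          simp [List.getElem_ofFn]
        rw [List.take_succ, hget, Option.toList_some, List.prod_append,
          List.prod_singleton, ih (le_of_lt hm)]
        rw [hf]
        simp only []
        rw [Matrix.mul_sub, Matrix.mul_one, posKron_mul]
        have hprod : (fun j : Fin k =>
            (if (j : ℕ) < m then R else 1) *
              (if j < (⟨m, hm⟩ : Fin k) then R else if j = (⟨m, hm⟩ : Fin k) then P else 1))
            = fun j : Fin k => if (j : ℕ) < m then R else
                if (j : ℕ) = m then P else 1 := by
          funext j
          by_cases h1 : (j : ℕ) < m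
          · simp [Fin.lt_def, h1, hRR]
          · by_cases h2 : (j : ℕ) = m
            · simp [Fin.lt_def, Fin.ext_iff, h1, h2]
            · simp [Fin.lt_def, Fin.ext_iff, h1, h2]
        rw [hprod, ← posKron_step P R hR m hm]
  have hfin := key k le_rfl
  rw [List.take_of_length_le (by simp)] at hfin
  have hfun : (fun l : Fin k => if (l : ℕ) < k then R else (1 : Matrix (Fin n1) (Fin n1) ℝ))
      = fun _ => R := funext fun l => if_pos l.isLt
  rw [hfin, hfun, kronPow]
end
end

section
/- Let E11 ∈ ℝ^{n1×n1} be invertible, A12 ∈ ℝ^{n1×n2} have full column rank with A12ᵀE11⁻¹A12 invertible, and Π = I_{n1} − A12(A12ᵀE11⁻¹A12)⁻¹A12ᵀE11⁻¹. Then for every positive integer k and every vector z ∈ ℝ^{n1^k}, one has Π^{⊗k} z = 0 if and only if z lies in the column space of M_k(A12), i.e. if and only if there exist vectors γ_1, …, γ_k with z = ∑_{i=1}^{k} (I_{n1}^{⊗(i−1)} ⊗ A12 ⊗ I_{n1}^{⊗(k−i)}) γ_i. -/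
open Matrix

noncomputable section

section Aux

/-- Heterogeneous position-dependent Kronecker product. -/
def hKron {k : ℕ} {α β : Fin k → Type*} (F : ∀ j, Matrix (α j) (β j) ℝ) :
    Matrix (∀ j, α j) (∀ j, β j) ℝ :=
  Matrix.of fun r c => ∏ j, F j (r j) (c j)

lemma hKron_mul {k : ℕ} {α β γ : Fin k → Type*} [∀ j, Fintype (β j)]
    [∀ j, DecidableEq (β j)]
    (F : ∀ j, Matrix (α j) (β j) ℝ) (G : ∀ j, Matrix (β j) (γ j) ℝ) :
    hKron F * hKron G = hKron fun j => F j * G j := by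
  ext r c
  show ∑ m : ∀ j, β j, (∏ j, F j (r j) (m j)) * ∏ j, G j (m j) (c j)
      = ∏ j, (F j * G j) (r j) (c j)
  simp_rw [← Finset.prod_mul_distrib, Matrix.mul_apply]
  rw [Finset.prod_univ_sum, Fintype.piFinset_univ]

lemma hKron_eq_zero {k : ℕ} {α β : Fin k → Type*} (F : ∀ j, Matrix (α j) (β j) ℝ)
    (i : Fin k) (h : F i = 0) : hKron F = 0 := by
  ext r c
  exact Finset.prod_eq_zero (Finset.mem_univ i) (by simp [h])

lemma hKron_one {n k : ℕ} :
    hKron (fun _ : Fin k => (1 : Matrix (Fin n) (Fin n) ℝ)) = 1 := by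
  ext r c
  simp only [hKron, Matrix.of_apply, Matrix.one_apply, Finset.prod_boole]
  simp [funext_iff]

lemma kronPow_eq_hKron {n k : ℕ} (X : Matrix (Fin n) (Fin n) ℝ) :
    kronPow k X = hKron (fun _ : Fin k => X) := rfl

/-- The `j`-th Kronecker factor of the `i`-th block of `M_k^B(A)`. -/
def mFac {n p q k : ℕ} (B : Matrix (Fin n) (Fin q) ℝ) (A : Matrix (Fin n) (Fin p) ℝ)
    (i j : Fin k) : Matrix (Fin n) (Fin (mCol q p n i j)) ℝ :=
  Matrix.of fun a b =>
    if h1 : j < i then B a (Fin.cast (by simp [mCol, h1]) b)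
    else if h2 : j = i then A a (Fin.cast (by simp [mCol, h1, h2]) b)
    else (1 : Matrix (Fin n) (Fin n) ℝ) a (Fin.cast (by simp [mCol, h1, h2]) b)

lemma mBlock_eq_hKron {n p q k : ℕ} (B : Matrix (Fin n) (Fin q) ℝ)
    (A : Matrix (Fin n) (Fin p) ℝ) (i : Fin k) :
    mBlock B A i = hKron (mFac B A i) := rfl

/-- Right factors used to realise the telescoping blocks through `M_k(A)`. -/
def qFac {n1 n2 k : ℕ} (X : Matrix (Fin n1) (Fin n1) ℝ) (Q : Matrix (Fin n2) (Fin n1) ℝ)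
    (i j : Fin k) : Matrix (Fin (mCol n1 n2 n1 i j)) (Fin n1) ℝ :=
  Matrix.of fun a b =>
    if h1 : j < i then X (Fin.cast (by simp [mCol, h1]) a) b
    else if h2 : j = i then Q (Fin.cast (by simp [mCol, h1, h2]) a) b
    else (1 : Matrix (Fin n1) (Fin n1) ℝ) (Fin.cast (by simp [mCol, h1, h2]) a) b

lemma mFac_mul_qFac {n1 n2 k : ℕ} (A : Matrix (Fin n1) (Fin n2) ℝ)
    (X : Matrix (Fin n1) (Fin n1) ℝ) (Q : Matrix (Fin n2) (Fin n1) ℝ) (i j : Fin k) :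
    mFac (1 : Matrix (Fin n1) (Fin n1) ℝ) A i j * qFac X Q i j =
      if j < i then X else if j = i then A * Q else 1 := by
  by_cases h1 : j < i
  · have hc : mCol n1 n2 n1 i j = n1 := by simp [mCol, h1]
    ext a b
    rw [Matrix.mul_apply, if_pos h1]
    simp only [mFac, qFac, Matrix.of_apply, dif_pos h1]
    rw [Fintype.sum_equiv (finCongr hc)
      (fun m => (1 : Matrix (Fin n1) (Fin n1) ℝ) a (Fin.cast hc m) * X (Fin.cast hc m) b)
      (fun m' => (1 : Matrix (Fin n1) (Fin n1) ℝ) a m' * X m' b) (fun m => rfl),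
      ← Matrix.mul_apply, one_mul]
  · by_cases h2 : j = i
    · have hc : mCol n1 n2 n1 i j = n2 := by simp [mCol, h1, h2]
      ext a b
      rw [Matrix.mul_apply, if_neg h1, if_pos h2]
      simp only [mFac, qFac, Matrix.of_apply, dif_neg h1, dif_pos h2]
      rw [Fintype.sum_equiv (finCongr hc)
        (fun m => A a (Fin.cast hc m) * Q (Fin.cast hc m) b)
        (fun m' => A a m' * Q m' b) (fun m => rfl),
        ← Matrix.mul_apply]
    · have hc : mCol n1 n2 n1 i j = n1 := by simp [mCol, h1, h2]
      ext a b
      rw [Matrix.mul_apply, if_neg h1, if_neg h2]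
      simp only [mFac, qFac, Matrix.of_apply, dif_neg h1, dif_neg h2]
      rw [Fintype.sum_equiv (finCongr hc)
        (fun m => (1 : Matrix (Fin n1) (Fin n1) ℝ) a (Fin.cast hc m) *
          (1 : Matrix (Fin n1) (Fin n1) ℝ) (Fin.cast hc m) b)
        (fun m' => (1 : Matrix (Fin n1) (Fin n1) ℝ) a m' *
          (1 : Matrix (Fin n1) (Fin n1) ℝ) m' b) (fun m => rfl),
        ← Matrix.mul_apply, one_mul]

lemma telescope_s9 {n k : ℕ} (X : Matrix (Fin n) (Fin n) ℝ) :
    (1 : Matrix (Fin k → Fin n) (Fin k → Fin n) ℝ) - kronPow k X =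
      ∑ i : Fin k, hKron (fun j : Fin k =>
        if j < i then X else if j = i then (1 : Matrix (Fin n) (Fin n) ℝ) - X else 1) := by
  set U : ℕ → Matrix (Fin k → Fin n) (Fin k → Fin n) ℝ :=
    fun m => hKron (fun j : Fin k => if (j : ℕ) < m then X else 1) with hU
  have key : ∀ i : Fin k,
      hKron (fun j : Fin k =>
        if j < i then X else if j = i then (1 : Matrix (Fin n) (Fin n) ℝ) - X else 1)
        = U (i : ℕ) - U ((i : ℕ) + 1) := by
    intro i
    ext r c
    simp only [hU, hKron, Matrix.of_apply, Matrix.sub_apply]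
    have hsplit : ∀ H : Fin k → ℝ,
        ∏ j, H j = H i * ∏ j ∈ Finset.univ.erase i, H j :=
      fun H => (Finset.mul_prod_erase _ H (Finset.mem_univ i)).symm
    rw [hsplit, hsplit, hsplit]
    have e1 : ∀ j ∈ Finset.univ.erase i,
        (if j < i then X else if j = i then (1 : Matrix (Fin n) (Fin n) ℝ) - X else 1)
            (r j) (c j)
          = (if (j : ℕ) < (i : ℕ) then X else (1 : Matrix (Fin n) (Fin n) ℝ)) (r j) (c j) := by
      intro j hj
      have hne : j ≠ i := Finset.ne_of_mem_erase hj
      by_cases h : j < i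
      · simp [h, Fin.lt_def.mp h]
      · have : ¬ ((j : ℕ) < (i : ℕ)) := fun hh => h (Fin.lt_def.mpr hh)
        simp [h, hne, this]
    have e2 : ∀ j ∈ Finset.univ.erase i,
        (if (j : ℕ) < (i : ℕ) + 1 then X else (1 : Matrix (Fin n) (Fin n) ℝ)) (r j) (c j)
          = (if (j : ℕ) < (i : ℕ) then X else (1 : Matrix (Fin n) (Fin n) ℝ)) (r j) (c j) := by
      intro j hj
      have hne : (j : ℕ) ≠ (i : ℕ) := fun hh => (Finset.ne_of_mem_erase hj) (Fin.ext hh)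
      by_cases h : (j : ℕ) < (i : ℕ)
      · simp [h, Nat.lt_succ_of_lt h]
      · have h2 : ¬ ((j : ℕ) < (i : ℕ) + 1) := by omega
        simp [h, h2]
    rw [Finset.prod_congr rfl e1, Finset.prod_congr rfl e2]
    have hii : ¬ (i < i) := lt_irrefl i
    have hiin : ¬ ((i : ℕ) < (i : ℕ)) := lt_irrefl _
    have hisucc : (i : ℕ) < (i : ℕ) + 1 := Nat.lt_succ_self _
    rw [if_neg hii, if_pos rfl, if_neg hiin, if_pos hisucc, Matrix.sub_apply, sub_mul,
      Matrix.one_apply]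
  rw [Finset.sum_congr rfl (fun i _ => key i),
    Fin.sum_univ_eq_sum_range (fun m => U m - U (m + 1)) k, Finset.sum_range_sub' U k]
  have h0 : U 0 = 1 := by
    rw [hU]
    simp only [Nat.not_lt_zero, if_false]
    exact hKron_one
  have hk' : U k = kronPow k X := by
    rw [hU, kronPow_eq_hKron]
    simp only [Fin.is_lt, if_true]
  rw [h0, hk']

lemma sum_mulVec' {m : Type*} {n : Type*} [Fintype n] {ι : Type*} (s : Finset ι)
    (A : ι → Matrix m n ℝ) (v : n → ℝ) :
    (∑ i ∈ s, A i).mulVec v = ∑ i ∈ s, (A i).mulVec v := by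
  ext x
  simp only [Matrix.mulVec, dotProduct, Finset.sum_apply, Matrix.sum_apply, Finset.sum_mul]
  exact Finset.sum_comm

lemma mulVec_sum' {m : Type*} {n : Type*} [Fintype n] {ι : Type*} (s : Finset ι)
    (A : Matrix m n ℝ) (v : ι → n → ℝ) :
    A.mulVec (∑ i ∈ s, v i) = ∑ i ∈ s, A.mulVec (v i) := by
  ext x
  simp only [Matrix.mulVec, dotProduct, Finset.sum_apply, Finset.mul_sum]
  exact Finset.sum_comm

end Aux

/-- With `Π = I - A12 (A12ᵀ E11⁻¹ A12)⁻¹ A12ᵀ E11⁻¹`, for every positive integer `k`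
and `z ∈ ℝ^{n1^k}` one has `Π^{⊗k} z = 0` iff `z` lies in the column space of
`M_k(A12)`, i.e. iff there exist `γ_1, …, γ_k` with
`z = ∑_{i=1}^{k} (I^{⊗(i-1)} ⊗ A12 ⊗ I^{⊗(k-i)}) γ_i`. -/
theorem stmt9 {n1 n2 : ℕ} (E11 : Matrix (Fin n1) (Fin n1) ℝ) (hE : IsUnit E11)
    (A12 : Matrix (Fin n1) (Fin n2) ℝ) (hA : A12.rank = n2)
    (hS : IsUnit (A12ᵀ * E11⁻¹ * A12))
    (Proj : Matrix (Fin n1) (Fin n1) ℝ)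
    (hProj : Proj = 1 - A12 * (A12ᵀ * E11⁻¹ * A12)⁻¹ * A12ᵀ * E11⁻¹)
    (k : ℕ) (hk : 0 < k) (z : (Fin k → Fin n1) → ℝ) :
    (kronPow k Proj).mulVec z = 0 ↔
      ∃ γ : ∀ i : Fin k, (∀ j : Fin k, Fin (mCol n1 n2 n1 i j)) → ℝ,
        z = ∑ i : Fin k,
          (mBlock (1 : Matrix (Fin n1) (Fin n1) ℝ) A12 i).mulVec (γ i) := by
  have hSd : IsUnit (A12ᵀ * E11⁻¹ * A12).det :=
    (Matrix.isUnit_iff_isUnit_det _).mp hS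
  have hinv : (A12ᵀ * E11⁻¹ * A12)⁻¹ * (A12ᵀ * E11⁻¹ * A12) = 1 :=
    Matrix.nonsing_inv_mul _ hSd
  have habs : A12 * (A12ᵀ * E11⁻¹ * A12)⁻¹ * A12ᵀ * E11⁻¹ * A12 = A12 := by
    calc A12 * (A12ᵀ * E11⁻¹ * A12)⁻¹ * A12ᵀ * E11⁻¹ * A12
        = A12 * ((A12ᵀ * E11⁻¹ * A12)⁻¹ * (A12ᵀ * E11⁻¹ * A12)) := by
          simp only [Matrix.mul_assoc]
      _ = A12 := by rw [hinv, Matrix.mul_one]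
  have hPA : Proj * A12 = 0 := by
    rw [hProj, Matrix.sub_mul, Matrix.one_mul, habs, sub_self]
  set Qm : Matrix (Fin n2) (Fin n1) ℝ := (A12ᵀ * E11⁻¹ * A12)⁻¹ * (A12ᵀ * E11⁻¹) with hQm
  have hAQ : A12 * Qm = 1 - Proj := by
    rw [hProj, sub_sub_cancel, hQm]
    simp only [Matrix.mul_assoc]
  constructor
  · intro h
    refine ⟨fun i => (hKron (qFac Proj Qm i)).mulVec z, ?_⟩
    have hfac : ∀ i : Fin k,
        (mBlock (1 : Matrix (Fin n1) (Fin n1) ℝ) A12 i).mulVec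
            ((hKron (qFac Proj Qm i)).mulVec z)
          = (hKron (fun j : Fin k =>
              if j < i then Proj else if j = i then
                (1 : Matrix (Fin n1) (Fin n1) ℝ) - Proj else 1)).mulVec z := by
      intro i
      rw [Matrix.mulVec_mulVec, mBlock_eq_hKron, hKron_mul]
      have hfun : (fun j : Fin k =>
          mFac (1 : Matrix (Fin n1) (Fin n1) ℝ) A12 i j * qFac Proj Qm i j)
          = (fun j : Fin k => if j < i then Proj else if j = i then
              (1 : Matrix (Fin n1) (Fin n1) ℝ) - Proj else 1) := by
        funext j
        rw [mFac_mul_qFac, hAQ]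
      rw [hfun]
    calc z = (1 : Matrix (Fin k → Fin n1) (Fin k → Fin n1) ℝ).mulVec z
          - (kronPow k Proj).mulVec z := by rw [h, sub_zero, Matrix.one_mulVec]
      _ = ((1 : Matrix (Fin k → Fin n1) (Fin k → Fin n1) ℝ)
            - kronPow k Proj).mulVec z := by rw [Matrix.sub_mulVec]
      _ = (∑ i : Fin k, hKron (fun j : Fin k =>
              if j < i then Proj else if j = i then
                (1 : Matrix (Fin n1) (Fin n1) ℝ) - Proj else 1)).mulVec z := by
            rw [telescope_s9]
      _ = ∑ i : Fin k, (hKron (fun j : Fin k =>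
              if j < i then Proj else if j = i then
                (1 : Matrix (Fin n1) (Fin n1) ℝ) - Proj else 1)).mulVec z :=
            sum_mulVec' _ _ _
      _ = ∑ i : Fin k, (mBlock (1 : Matrix (Fin n1) (Fin n1) ℝ) A12 i).mulVec
            ((hKron (qFac Proj Qm i)).mulVec z) :=
            Finset.sum_congr rfl (fun i _ => (hfac i).symm)
  · rintro ⟨γ, rfl⟩
    have hzero : ∀ i : Fin k,
        kronPow k Proj * mBlock (1 : Matrix (Fin n1) (Fin n1) ℝ) A12 i = 0 := by
      intro i
      rw [kronPow_eq_hKron, mBlock_eq_hKron, hKron_mul]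
      apply hKron_eq_zero _ i
      ext a b
      have hc : mCol n1 n2 n1 i i = n2 := by simp [mCol]
      rw [Matrix.mul_apply]
      have hm : ∀ m : Fin n1, mFac (1 : Matrix (Fin n1) (Fin n1) ℝ) A12 i i m b
          = A12 m (Fin.cast hc b) := by
        intro m
        simp [mFac, lt_irrefl]
      simp_rw [hm]
      rw [← Matrix.mul_apply, hPA]
      simp
    rw [mulVec_sum']
    refine Finset.sum_eq_zero fun i _ => ?_
    rw [Matrix.mulVec_mulVec, hzero i, Matrix.zero_mulVec]
end
end

section
/- Let E11 ∈ ℝ^{n1×n1} be invertible, A12 ∈ ℝ^{n1×n2} have full column rank with A12ᵀE11⁻¹A12 invertible, and Π = I_{n1} − A12(A12ᵀE11⁻¹A12)⁻¹A12ᵀE11⁻¹. If a vector w ∈ ℝ^{n1^k} satisfies (Πᵀ)^{⊗k} w = w, then (I_{n1}^{⊗(i−1)} ⊗ A12ᵀ ⊗ I_{n1}^{⊗(k−i)}) w = 0 for every i = 1, …, k; equivalently, M_k(A12)ᵀ w = 0. -/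
open Matrix

noncomputable section

lemma kron_mul_block_aux {n1 n2 k : ℕ} (P : Matrix (Fin n1) (Fin n1) ℝ)
    (A : Matrix (Fin n1) (Fin n2) ℝ) (hPA : P * A = 0) (i : Fin k) :
    kronPow k P * mBlock (1 : Matrix (Fin n1) (Fin n1) ℝ) A i = 0 := by
  ext r c
  simp only [Matrix.mul_apply, kronPow, posKron, mBlock, Matrix.of_apply, Matrix.zero_apply]
  rw [show (Finset.univ : Finset (Fin k → Fin n1)) = Fintype.piFinset (fun _ => Finset.univ)
      from (Fintype.piFinset_univ).symm]
  simp only [← Finset.prod_mul_distrib]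
  rw [← Finset.prod_univ_sum (fun _ : Fin k => (Finset.univ : Finset (Fin n1)))
    (fun j y => P (r j) y *
      (if h1 : j < i then (1 : Matrix (Fin n1) (Fin n1) ℝ) y (Fin.cast (by simp [mCol, h1]) (c j))
       else if h2 : j = i then A y (Fin.cast (by simp [mCol, h1, h2]) (c j))
       else (1 : Matrix (Fin n1) (Fin n1) ℝ) y (Fin.cast (by simp [mCol, h1, h2]) (c j))))]
  apply Finset.prod_eq_zero (Finset.mem_univ i)
  simp only [lt_irrefl, dite_false, dite_true, dif_neg (lt_irrefl i), dif_pos rfl]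
  have := congrFun (congrFun hPA (r i)) (Fin.cast (by simp [mCol]) (c i))
  simpa [Matrix.mul_apply] using this

lemma kronPow_transpose {n k : ℕ} (X : Matrix (Fin n) (Fin n) ℝ) :
    (kronPow k X)ᵀ = kronPow k Xᵀ := by
  ext r c
  simp [kronPow, posKron, Matrix.transpose_apply]

/-- With `Π = I - A12 (A12ᵀ E11⁻¹ A12)⁻¹ A12ᵀ E11⁻¹`: if `w ∈ ℝ^{n1^k}` satisfies
`(Πᵀ)^{⊗k} w = w`, then `(I^{⊗(i-1)} ⊗ A12ᵀ ⊗ I^{⊗(k-i)}) w = 0` for every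
`i = 1, …, k`; equivalently `M_k(A12)ᵀ w = 0`. -/
theorem stmt10 {n1 n2 : ℕ} (E11 : Matrix (Fin n1) (Fin n1) ℝ) (hE : IsUnit E11)
    (A12 : Matrix (Fin n1) (Fin n2) ℝ) (hA : A12.rank = n2)
    (hS : IsUnit (A12ᵀ * E11⁻¹ * A12))
    (Proj : Matrix (Fin n1) (Fin n1) ℝ)
    (hProj : Proj = 1 - A12 * (A12ᵀ * E11⁻¹ * A12)⁻¹ * A12ᵀ * E11⁻¹)
    (k : ℕ) (hk : 0 < k) (w : (Fin k → Fin n1) → ℝ)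
    (hw : (kronPow k Projᵀ).mulVec w = w) :
    (∀ i : Fin k,
        (mBlock (1 : Matrix (Fin n1) (Fin n1) ℝ) A12 i)ᵀ.mulVec w = 0)
    ∧ (mFull k (1 : Matrix (Fin n1) (Fin n1) ℝ) A12)ᵀ.mulVec w = 0 := by
  have hSinv : (A12ᵀ * E11⁻¹ * A12)⁻¹ * (A12ᵀ * E11⁻¹ * A12) = 1 :=
    Matrix.nonsing_inv_mul _ ((Matrix.isUnit_iff_isUnit_det _).mp hS)
  have hPA : Proj * A12 = 0 := by
    rw [hProj, Matrix.sub_mul, Matrix.one_mul]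
    have : A12 * (A12ᵀ * E11⁻¹ * A12)⁻¹ * A12ᵀ * E11⁻¹ * A12
        = A12 * ((A12ᵀ * E11⁻¹ * A12)⁻¹ * (A12ᵀ * E11⁻¹ * A12)) := by
      simp only [Matrix.mul_assoc]
    rw [this, hSinv, Matrix.mul_one, sub_self]
  have h1 : ∀ i : Fin k,
      (mBlock (1 : Matrix (Fin n1) (Fin n1) ℝ) A12 i)ᵀ.mulVec w = 0 := by
    intro i
    have := congrArg (fun v => (mBlock (1 : Matrix (Fin n1) (Fin n1) ℝ) A12 i)ᵀ.mulVec v) hw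
    rw [Matrix.mulVec_mulVec, ← kronPow_transpose, ← Matrix.transpose_mul,
      kron_mul_block_aux Proj A12 hPA i, Matrix.transpose_zero, Matrix.zero_mulVec] at this
    exact this.symm
  refine ⟨h1, ?_⟩
  funext c
  obtain ⟨i, c2⟩ := c
  have := congrFun (h1 i) c2
  simpa [Matrix.mulVec, Matrix.transpose_apply, mFull, dotProduct] using this
end
end

section
/- Let A12 ∈ ℝ^{n1×n2} have full column rank and R = I_{n1} − A12(A12ᵀA12)⁻¹A12ᵀ. Then for every positive integer k and every vector z ∈ ℝ^{n1^k}, one has M_k(A12)ᵀ z = 0 (i.e. z is orthogonal to every column of M_k(A12)) if and only if R^{⊗k} z = z. -/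
open Matrix

noncomputable section

/-! ### Auxiliary lemmas -/

lemma finCastCast {a b : ℕ} (h1 : a = b) (h2 : b = a) (x : Fin a) :
    Fin.cast h2 (Fin.cast h1 x) = x := by subst h1; rfl

/-- The `j`-th Kronecker factor of `mBlock B A i`, as a function of the row index. -/
def blockFac {n p q k : ℕ} (B : Matrix (Fin n) (Fin q) ℝ) (A : Matrix (Fin n) (Fin p) ℝ)
    (i : Fin k) (c : ∀ j : Fin k, Fin (mCol q p n i j)) (j : Fin k) (u : Fin n) : ℝ :=
  if h1 : j < i then B u (Fin.cast (by simp [mCol, h1]) (c j))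
  else if h2 : j = i then A u (Fin.cast (by simp [mCol, h1, h2]) (c j))
  else (1 : Matrix (Fin n) (Fin n) ℝ) u (Fin.cast (by simp [mCol, h1, h2]) (c j))

lemma mBlock_eq_prod {n p q k : ℕ} (B : Matrix (Fin n) (Fin q) ℝ)
    (A : Matrix (Fin n) (Fin p) ℝ) (i : Fin k) (r : Fin k → Fin n)
    (c : ∀ j : Fin k, Fin (mCol q p n i j)) :
    mBlock B A i r c = ∏ j, blockFac B A i c j (r j) := rfl

lemma blockFac_self {n p q k : ℕ} (B : Matrix (Fin n) (Fin q) ℝ)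
    (A : Matrix (Fin n) (Fin p) ℝ) (i : Fin k) (c : ∀ j : Fin k, Fin (mCol q p n i j))
    (u : Fin n) :
    blockFac B A i c i u = A u (Fin.cast (by simp [mCol]) (c i)) := by
  simp [blockFac]

/-- Collapsing a sum over functions against delta factors at all positions except `i`. -/
lemma collapse {n k : ℕ} (i : Fin k) (f : Fin k → Fin n) (w : Fin n → ℝ)
    (g : (Fin k → Fin n) → ℝ) :
    ∑ r : Fin k → Fin n, (∏ j, if j = i then w (r j) else if f j = r j then (1:ℝ) else 0) * g r
      = ∑ t : Fin n, w t * g (Function.update f i t) := by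
  classical
  have hinj : Function.Injective (fun t : Fin n => Function.update f i t) := by
    intro a b hab
    have := congrFun hab i
    simpa using this
  have step1 : ∑ r : Fin k → Fin n,
        (∏ j, if j = i then w (r j) else if f j = r j then (1:ℝ) else 0) * g r
      = ∑ r ∈ Finset.univ.image (fun t : Fin n => Function.update f i t),
        (∏ j, if j = i then w (r j) else if f j = r j then (1:ℝ) else 0) * g r := by
    refine (Finset.sum_subset (Finset.subset_univ _) ?_).symm
    intro r _ hr
    have hne : ¬ ∀ j, j ≠ i → r j = f j := by
      intro hall
      apply hr
      refine Finset.mem_image.mpr ⟨r i, Finset.mem_univ _, ?_⟩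
      funext j
      by_cases hj : j = i
      · subst hj; simp
      · rw [Function.update_of_ne hj]; exact (hall j hj).symm
    push_neg at hne
    obtain ⟨j, hj, hjne⟩ := hne
    have hz : (∏ j', if j' = i then w (r j') else if f j' = r j' then (1:ℝ) else 0) = 0 :=
      Finset.prod_eq_zero (Finset.mem_univ j)
        (by rw [if_neg hj, if_neg (fun h : f j = r j => hjne h.symm)])
    rw [hz, zero_mul]
  rw [step1, Finset.sum_image (fun a _ b _ h => hinj h)]
  refine Finset.sum_congr rfl fun t _ => ?_
  congr 1
  rw [Finset.prod_eq_single i]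
  · simp
  · intro j _ hj
    rw [if_neg hj, Function.update_of_ne hj, if_pos rfl]
  · intro h; exact absurd (Finset.mem_univ i) h

/-- Let `A12 ∈ ℝ^{n1×n2}` have full column rank and `R = I - A12 (A12ᵀ A12)⁻¹ A12ᵀ`.
For every positive integer `k` and `z ∈ ℝ^{n1^k}`, `M_k(A12)ᵀ z = 0` iff
`R^{⊗k} z = z`. -/
theorem stmt11 {n1 n2 : ℕ} (A12 : Matrix (Fin n1) (Fin n2) ℝ) (hA : A12.rank = n2)
    (R : Matrix (Fin n1) (Fin n1) ℝ)
    (hR : R = 1 - A12 * (A12ᵀ * A12)⁻¹ * A12ᵀ)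
    (k : ℕ) (hk : 0 < k) (z : (Fin k → Fin n1) → ℝ) :
    (mFull k (1 : Matrix (Fin n1) (Fin n1) ℝ) A12)ᵀ.mulVec z = 0
      ↔ (kronPow k R).mulVec z = z := by
  classical
  -- `A12ᵀ * A12` is invertible
  have hU : IsUnit (A12ᵀ * A12) := by
    rw [← Matrix.mulVec_surjective_iff_isUnit]
    have hr : (A12ᵀ * A12).rank = Fintype.card (Fin n2) := by
      rw [Matrix.rank_transpose_mul_self, hA, Fintype.card_fin]
    rw [Matrix.rank] at hr
    have htop : LinearMap.range (A12ᵀ * A12).mulVecLin = ⊤ := by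
      apply Submodule.eq_top_of_finrank_eq
      rw [hr, Module.finrank_pi]
    intro v
    have hv : v ∈ LinearMap.range (A12ᵀ * A12).mulVecLin := htop ▸ Submodule.mem_top
    obtain ⟨x, hx⟩ := hv
    exact ⟨x, hx⟩
  have hUdet : IsUnit (A12ᵀ * A12).det := (Matrix.isUnit_iff_isUnit_det _).mp hU
  -- `A12ᵀ * R = 0`
  have hTR : A12ᵀ * R = 0 := by
    rw [hR, Matrix.mul_sub, Matrix.mul_one,
      show A12ᵀ * (A12 * (A12ᵀ * A12)⁻¹ * A12ᵀ) = A12ᵀ * A12 * (A12ᵀ * A12)⁻¹ * A12ᵀ by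
        rw [Matrix.mul_assoc, Matrix.mul_assoc, Matrix.mul_assoc],
      Matrix.mul_nonsing_inv _ hUdet, Matrix.one_mul, sub_self]
  -- `R` fixes the kernel of `A12ᵀ`
  have hfix : ∀ w : Fin n1 → ℝ, A12ᵀ.mulVec w = 0 → R.mulVec w = w := by
    intro w hw
    rw [hR, Matrix.sub_mulVec, Matrix.one_mulVec, Matrix.mul_assoc,
      ← Matrix.mulVec_mulVec, ← Matrix.mulVec_mulVec, hw, Matrix.mulVec_zero,
      Matrix.mulVec_zero, sub_zero]
  constructor
  · -- forward direction
    intro h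
    -- clean form of the hypothesis
    have hClean : ∀ (i : Fin k) (f : Fin k → Fin n1) (s : Fin n2),
        ∑ t, A12 t s * z (Function.update f i t) = 0 := by
      intro i f s
      have h1 := congrFun h ⟨i, fun j =>
        if h1 : j < i then Fin.cast (by simp [mCol, h1]) (f j)
        else if h2 : j = i then Fin.cast (by simp [mCol, h1, h2]) s
        else Fin.cast (by simp [mCol, h1, h2]) (f j)⟩
      simp only [Matrix.mulVec, Matrix.transpose_apply, mFull, Matrix.of_apply,
        Pi.zero_apply, dotProduct] at h1
      -- h1 : ∑ r, mBlock 1 A12 i r c * z r = 0 for the chosen column c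
      have heq : ∑ r : Fin k → Fin n1, (mBlock (1 : Matrix (Fin n1) (Fin n1) ℝ) A12 i r
            (fun j => if h1 : j < i then Fin.cast (by simp [mCol, h1]) (f j)
              else if h2 : j = i then Fin.cast (by simp [mCol, h1, h2]) s
              else Fin.cast (by simp [mCol, h1, h2]) (f j))) * z r
          = ∑ r : Fin k → Fin n1,
            (∏ j, if j = i then A12 (r j) s else if f j = r j then (1:ℝ) else 0) * z r := by
        refine Finset.sum_congr rfl fun r _ => ?_
        congr 1
        simp only [mBlock, Matrix.of_apply]
        refine Finset.prod_congr rfl fun j _ => ?_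
        by_cases hj1 : j < i
        · have hj2 : j ≠ i := ne_of_lt hj1
          simp only [dif_pos hj1, finCastCast, Matrix.one_apply, if_neg hj2]
          exact if_congr eq_comm rfl rfl
        · by_cases hj2 : j = i
          · subst hj2
            simp [finCastCast]
          · simp only [dif_neg hj1, dif_neg hj2, finCastCast, Matrix.one_apply, if_neg hj2]
            exact if_congr eq_comm rfl rfl
      exact (collapse i f (fun t => A12 t s) z).symm.trans (heq.symm.trans h1)
    -- each single-position factor fixes z
    have hP : ∀ i : Fin k,
        (posKron (fun j => if j = i then R else 1)).mulVec z = z := by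
      intro i
      funext r
      show ∑ m : Fin k → Fin n1,
          (∏ j, (if j = i then R else 1) (r j) (m j)) * z m = z r
      have hre : ∑ m : Fin k → Fin n1,
            (∏ j, (if j = i then R else 1) (r j) (m j)) * z m
          = ∑ m : Fin k → Fin n1,
            (∏ j, if j = i then R (r i) (m j) else if r j = m j then (1:ℝ) else 0) * z m := by
        refine Finset.sum_congr rfl fun m _ => ?_
        congr 1
        refine Finset.prod_congr rfl fun j _ => ?_
        by_cases hj : j = i
        · subst hj; simp
        · simp [hj, Matrix.one_apply]
      rw [hre]
      refine (collapse i r (fun t => R (r i) t) z).trans ?_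
      set w : Fin n1 → ℝ := fun t => z (Function.update r i t) with hwdef
      have hw0 : A12ᵀ.mulVec w = 0 := by
        funext s
        simpa [Matrix.mulVec, dotProduct, Matrix.transpose_apply, hwdef]
          using hClean i r s
      have hfr := congrFun (hfix w hw0) (r i)
      simpa [Matrix.mulVec, dotProduct, hwdef, Function.update_eq_self]
        using hfr
    -- inductive factorisation
    have hstep : ∀ m : ℕ, m ≤ k →
        (posKron (fun j : Fin k => if (j : ℕ) < m then R else 1)).mulVec z = z := by
      intro m
      induction m with
      | zero =>
        intro _
        have he : (fun j : Fin k => if (j : ℕ) < 0 then R else 1)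
            = fun _ : Fin k => (1 : Matrix (Fin n1) (Fin n1) ℝ) := by
          funext j; simp
        rw [he, posKron_one, Matrix.one_mulVec]
      | succ m ih =>
        intro hm
        have hm' : m < k := hm
        have hmk := ih (le_of_lt hm')
        have harg : (fun j : Fin k => if (j : ℕ) < m + 1 then R else 1)
            = fun j : Fin k => (if j = (⟨m, hm'⟩ : Fin k) then R else 1)
              * (if (j : ℕ) < m then R else 1) := by
          funext j
          rcases lt_trichotomy (j : ℕ) m with hlt | heq | hgt
          · have hne : j ≠ (⟨m, hm'⟩ : Fin k) := by
              intro hc; rw [hc] at hlt; exact absurd hlt (lt_irrefl m)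
            rw [if_pos (show (j : ℕ) < m + 1 by omega), if_neg hne, if_pos hlt,
              Matrix.one_mul]
          · have hje : j = (⟨m, hm'⟩ : Fin k) := Fin.ext heq
            rw [if_pos (show (j : ℕ) < m + 1 by omega), if_pos hje,
              if_neg (show ¬ (j : ℕ) < m by omega), Matrix.mul_one]
          · have hne : j ≠ (⟨m, hm'⟩ : Fin k) := by
              intro hc; rw [hc] at hgt; exact absurd hgt (lt_irrefl m)
            rw [if_neg (show ¬ (j : ℕ) < m + 1 by omega), if_neg hne,
              if_neg (show ¬ (j : ℕ) < m by omega), Matrix.one_mul]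
        rw [harg, ← posKron_mul, ← Matrix.mulVec_mulVec, hmk]
        exact hP _
    have hfin := hstep k (le_refl k)
    have hkr : (fun j : Fin k => if (j : ℕ) < k then R else 1) = fun _ : Fin k => R := by
      funext j; rw [if_pos j.isLt]
    rw [hkr] at hfin
    exact hfin
  · -- backward direction
    intro hz
    funext σ
    obtain ⟨i, c⟩ := σ
    show ((mFull k (1 : Matrix (Fin n1) (Fin n1) ℝ) A12)ᵀ.mulVec z) ⟨i, c⟩ = 0
    simp only [Matrix.mulVec, Matrix.transpose_apply, mFull, Matrix.of_apply,
      dotProduct]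
    have hzz : ∀ r : Fin k → Fin n1, z r = ∑ m : Fin k → Fin n1,
        (∏ j, R (r j) (m j)) * z m := fun r => (congrFun hz r).symm
    calc ∑ r : Fin k → Fin n1, mBlock 1 A12 i r c * z r
        = ∑ r : Fin k → Fin n1, mBlock 1 A12 i r c
            * ∑ m : Fin k → Fin n1, (∏ j, R (r j) (m j)) * z m := by
          refine Finset.sum_congr rfl fun r _ => ?_
          rw [← hzz r]
      _ = ∑ m : Fin k → Fin n1,
            (∑ r : Fin k → Fin n1, mBlock 1 A12 i r c * ∏ j, R (r j) (m j)) * z m := by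
          simp only [Finset.mul_sum, Finset.sum_mul]
          rw [Finset.sum_comm]
          refine Finset.sum_congr rfl fun m _ => Finset.sum_congr rfl fun r _ => ?_
          ring
      _ = 0 := by
          have hinner : ∀ m : Fin k → Fin n1,
              (∑ r : Fin k → Fin n1, mBlock 1 A12 i r c * ∏ j, R (r j) (m j)) = 0 := by
            intro m
            have hps := Finset.prod_univ_sum (fun _ : Fin k => (Finset.univ : Finset (Fin n1)))
              (fun j u => blockFac (1 : Matrix (Fin n1) (Fin n1) ℝ) A12 i c j u * R u (m j))
            rw [Fintype.piFinset_univ] at hps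
            calc ∑ r : Fin k → Fin n1, mBlock 1 A12 i r c * ∏ j, R (r j) (m j)
                = ∑ r : Fin k → Fin n1,
                    ∏ j, blockFac (1 : Matrix (Fin n1) (Fin n1) ℝ) A12 i c j (r j)
                      * R (r j) (m j) := by
                  refine Finset.sum_congr rfl fun r _ => ?_
                  rw [mBlock_eq_prod, ← Finset.prod_mul_distrib]
              _ = ∏ j, ∑ u, blockFac (1 : Matrix (Fin n1) (Fin n1) ℝ) A12 i c j u
                      * R u (m j) := hps.symm
              _ = 0 := by
                  refine Finset.prod_eq_zero (Finset.mem_univ i) ?_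
                  have h2 : ∀ u : Fin n1,
                      blockFac (1 : Matrix (Fin n1) (Fin n1) ℝ) A12 i c i u
                        = A12 u (Fin.cast (by simp [mCol]) (c i)) :=
                    fun u => blockFac_self _ _ _ _ _
                  rw [Finset.sum_congr rfl fun u _ => by rw [h2 u]]
                  have h3 : (∑ u, A12 u (Fin.cast (by simp [mCol] :
                        mCol n1 n2 n1 i i = n2) (c i)) * R u (m i))
                      = (A12ᵀ * R) (Fin.cast (by simp [mCol] :
                        mCol n1 n2 n1 i i = n2) (c i)) (m i) := by
                    simp [Matrix.mul_apply, Matrix.transpose_apply]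
                  rw [h3, hTR]
                  simp
          rw [Finset.sum_congr rfl fun m _ => by rw [hinner m]]
          simp
end
end

section
/- Let E11 ∈ ℝ^{n1×n1} be invertible, A12 ∈ ℝ^{n1×n2} have full column rank with A12ᵀE11⁻¹A12 invertible, Π = I_{n1} − A12(A12ᵀE11⁻¹A12)⁻¹A12ᵀE11⁻¹, and R = I_{n1} − A12(A12ᵀA12)⁻¹A12ᵀ. Let Θ_ℓ, Θ_r ∈ ℝ^{n1×(n1−n2)} satisfy Π = Θ_ℓΘ_rᵀ and Θ_ℓᵀΘ_r = I_{n1−n2}, and let Q1 ∈ ℝ^{n1×(n1−n2)} have orthonormal columns (Q1ᵀQ1 = I_{n1−n2}) with Q1 Q1ᵀ = R. Then the (n1−n2)×(n1−n2) matrix Θ_ℓᵀ Q1 is invertible. -/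
open Matrix

noncomputable section

lemma isUnit_of_rank_eq {k : ℕ} (B : Matrix (Fin k) (Fin k) ℝ) (h : B.rank = k) :
    IsUnit B := by
  rw [← Matrix.mulVec_surjective_iff_isUnit]
  have : LinearMap.range B.mulVecLin = ⊤ := by
    apply Submodule.eq_top_of_finrank_eq
    simpa [Matrix.rank] using h
  intro y
  exact (LinearMap.range_eq_top.mp this) y

/-- Let `Π = I - A12 (A12ᵀ E11⁻¹ A12)⁻¹ A12ᵀ E11⁻¹`,
`R = I - A12 (A12ᵀ A12)⁻¹ A12ᵀ`, let `Θℓ, Θr` satisfy `Π = Θℓ Θrᵀ`, `Θℓᵀ Θr = I`,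
and let `Q1` have orthonormal columns with `Q1 Q1ᵀ = R`.  Then `Θℓᵀ Q1` is invertible. -/
theorem stmt13 {n1 n2 : ℕ} (E11 : Matrix (Fin n1) (Fin n1) ℝ) (hE : IsUnit E11)
    (A12 : Matrix (Fin n1) (Fin n2) ℝ) (hA : A12.rank = n2)
    (hS : IsUnit (A12ᵀ * E11⁻¹ * A12))
    (Proj : Matrix (Fin n1) (Fin n1) ℝ)
    (hProj : Proj = 1 - A12 * (A12ᵀ * E11⁻¹ * A12)⁻¹ * A12ᵀ * E11⁻¹)
    (R : Matrix (Fin n1) (Fin n1) ℝ)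
    (hR : R = 1 - A12 * (A12ᵀ * A12)⁻¹ * A12ᵀ)
    (Θl Θr : Matrix (Fin n1) (Fin (n1 - n2)) ℝ)
    (hPfac : Proj = Θl * Θrᵀ) (hΘ : Θlᵀ * Θr = 1)
    (Q1 : Matrix (Fin n1) (Fin (n1 - n2)) ℝ)
    (hQorth : Q1ᵀ * Q1 = 1) (hQR : Q1 * Q1ᵀ = R) :
    IsUnit (Θlᵀ * Q1) := by
  have hG : IsUnit (A12ᵀ * A12) := by
    apply isUnit_of_rank_eq
    rw [Matrix.rank_transpose_mul_self, hA]
  have hSinv : (A12ᵀ * E11⁻¹ * A12)⁻¹ * (A12ᵀ * E11⁻¹ * A12) = 1 :=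
    Matrix.nonsing_inv_mul _ ((Matrix.isUnit_iff_isUnit_det _).mp hS)
  have hPA : Proj * A12 = 0 := by
    rw [hProj, Matrix.sub_mul, Matrix.one_mul]
    have h2 : A12 * (A12ᵀ * E11⁻¹ * A12)⁻¹ * A12ᵀ * E11⁻¹ * A12
        = A12 * ((A12ᵀ * E11⁻¹ * A12)⁻¹ * (A12ᵀ * E11⁻¹ * A12)) := by
      simp only [Matrix.mul_assoc]
    rw [h2, hSinv, Matrix.mul_one, sub_self]
  have hGinv : (A12ᵀ * A12)⁻¹ * (A12ᵀ * A12) = 1 :=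
    Matrix.nonsing_inv_mul _ ((Matrix.isUnit_iff_isUnit_det _).mp hG)
  have hRA : R * A12 = 0 := by
    rw [hR, Matrix.sub_mul, Matrix.one_mul]
    have h2 : A12 * (A12ᵀ * A12)⁻¹ * A12ᵀ * A12
        = A12 * ((A12ᵀ * A12)⁻¹ * (A12ᵀ * A12)) := by
      simp only [Matrix.mul_assoc]
    rw [h2, hGinv, Matrix.mul_one, sub_self]
  have hPR : Proj * R = Proj := by
    rw [hR, Matrix.mul_sub, Matrix.mul_one]
    have h2 : Proj * (A12 * (A12ᵀ * A12)⁻¹ * A12ᵀ)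
        = (Proj * A12) * ((A12ᵀ * A12)⁻¹ * A12ᵀ) := by
      simp only [Matrix.mul_assoc]
    rw [h2, hPA, Matrix.zero_mul, sub_zero]
  have hRP : R * Proj = R := by
    rw [hProj, Matrix.mul_sub, Matrix.mul_one]
    have h2 : R * (A12 * (A12ᵀ * E11⁻¹ * A12)⁻¹ * A12ᵀ * E11⁻¹)
        = (R * A12) * ((A12ᵀ * E11⁻¹ * A12)⁻¹ * A12ᵀ * E11⁻¹) := by
      simp only [Matrix.mul_assoc]
    rw [h2, hRA, Matrix.zero_mul, sub_zero]
  have hΘr : Θrᵀ * Θl = 1 := by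
    have h := congrArg Matrix.transpose hΘ
    simpa [Matrix.transpose_mul] using h
  -- Θrᵀ * R = Θrᵀ
  have hΘrR : Θrᵀ * R = Θrᵀ := by
    have h1 : Θl * Θrᵀ * R = Θl * Θrᵀ := by rw [← hPfac]; exact hPR
    calc Θrᵀ * R = (Θrᵀ * Θl) * (Θrᵀ * R) := by rw [hΘr, Matrix.one_mul]
    _ = Θrᵀ * (Θl * Θrᵀ * R) := by simp only [Matrix.mul_assoc]
    _ = Θrᵀ * (Θl * Θrᵀ) := by rw [h1]
    _ = (Θrᵀ * Θl) * Θrᵀ := by simp only [Matrix.mul_assoc]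
    _ = Θrᵀ := by rw [hΘr, Matrix.one_mul]
  -- Q1ᵀ * Proj = Q1ᵀ
  have hQP : Q1ᵀ * Proj = Q1ᵀ := by
    have h1 : Q1 * Q1ᵀ * Proj = Q1 * Q1ᵀ := by rw [hQR]; exact hRP
    calc Q1ᵀ * Proj = (Q1ᵀ * Q1) * (Q1ᵀ * Proj) := by rw [hQorth, Matrix.one_mul]
    _ = Q1ᵀ * (Q1 * Q1ᵀ * Proj) := by simp only [Matrix.mul_assoc]
    _ = Q1ᵀ * (Q1 * Q1ᵀ) := by rw [h1]
    _ = (Q1ᵀ * Q1) * Q1ᵀ := by simp only [Matrix.mul_assoc]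
    _ = Q1ᵀ := by rw [hQorth, Matrix.one_mul]
  -- R symmetric, so R * Θr = Θr
  have hRsym : Rᵀ = R := by
    rw [hR]
    have hGsym : ((A12ᵀ * A12)⁻¹)ᵀ = (A12ᵀ * A12)⁻¹ := by
      rw [Matrix.transpose_nonsing_inv]
      congr 1
      rw [Matrix.transpose_mul, Matrix.transpose_transpose]
    simp [Matrix.transpose_sub, Matrix.transpose_mul, Matrix.transpose_transpose,
      hGsym, Matrix.mul_assoc]
  have hRΘr : R * Θr = Θr := by
    have h := congrArg Matrix.transpose hΘrR
    rwa [Matrix.transpose_mul, Matrix.transpose_transpose, hRsym] at h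
  have key : (Θlᵀ * Q1) * (Q1ᵀ * Θr) = 1 := by
    calc (Θlᵀ * Q1) * (Q1ᵀ * Θr) = Θlᵀ * (Q1 * Q1ᵀ * Θr) := by simp only [Matrix.mul_assoc]
    _ = Θlᵀ * (R * Θr) := by rw [hQR]
    _ = Θlᵀ * Θr := by rw [hRΘr]
    _ = 1 := hΘ
  exact (Matrix.isUnit_iff_isUnit_det _).mpr (Matrix.isUnit_det_of_right_inverse key)
end
end
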